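/- arXiv:2005.04759 — 3 statements merged into one kernel-verified Lean document; each statement's English description precedes it below -/
import Mathlib

section
/- Let y = (k^n) with k ≥ 2 and z ∈ Z_+. The number of permutation-invariant parking sequences for (y;z) equals z(n+z)^{n-1}. -/
open Finset

/-- The first empty spot `j` with `c ≤ j ≤ M` (street spots are `1..M`). -/
def firstEmpty (occ : Finset ℕ) (M c : ℕ) : Option ℕ :=
  (List.range' c (M + 1 - c)).find? (fun j => decide (j ∉ occ))

/-- Park cars with preferences `cs` and lengths `ys` on a street with spots `1..M`,
where `occ` is the set of already-occupied spots.  Returns the list of starting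
spots of the cars (in order of entry) if all cars can park. -/
def parkAux (M : ℕ) : Finset ℕ → List ℕ → List ℕ → Option (List ℕ)
  | _, [], [] => some []
  | occ, c :: cs, y :: ys =>
    match firstEmpty occ M c with
    | none => none
    | some j =>
      if (∀ i ∈ Finset.Ico j (j + y), i ∉ occ) ∧ j + y - 1 ≤ M then
        (parkAux M (occ ∪ Finset.Ico j (j + y)) cs ys).map (j :: ·)
      else none
  | _, _, _ => none

/-- Outcome of the parking process for length vector `ys`, preference sequence `cs`,
and trailer parameter `z` (the trailer occupies spots `1,…,z-1`); the street has
`z - 1 + ys.sum` spots. -/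
def parkResult (ys cs : List ℕ) (z : ℕ) : Option (List ℕ) :=
  parkAux (z - 1 + ys.sum) (Finset.Ico 1 z) cs ys

/-- `cs` is a parking sequence for `(ys; z)`. -/
def IsParkingSeq (ys cs : List ℕ) (z : ℕ) : Prop :=
  cs.length = ys.length ∧ (∀ c ∈ cs, 1 ≤ c) ∧ (parkResult ys cs z).isSome = true

/-- Starting spots of the standard (no-gap, in order) final configuration. -/
def standardStarts (z : ℕ) : List ℕ → List ℕ
  | [] => []
  | y :: ys => z :: standardStarts (z + y) ys

/-- `cs` parks `ys` in the standard order `T, C₁, …, Cₙ`. -/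
def ParksStandard (ys cs : List ℕ) (z : ℕ) : Prop :=
  parkResult ys cs z = some (standardStarts z ys)

/-- `cs` is a permutation-invariant parking sequence for `(ys; z)`. -/
def PermInvariant (ys cs : List ℕ) (z : ℕ) : Prop :=
  ∀ cs' : List ℕ, cs'.Perm cs → IsParkingSeq ys cs' z

/-- `cs` is a strong parking sequence for `{ys; z}`. -/
def StrongParkingSeq (ys cs : List ℕ) (z : ℕ) : Prop :=
  ∀ ys' : List ℕ, ys'.Perm ys → IsParkingSeq ys' cs z

/-- The nondecreasing rearrangement (order statistics) of a list. -/
def orderStats (l : List ℕ) : List ℕ :=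
  Multiset.sort (l : Multiset ℕ) (· ≤ ·)

/-- `xs` is a `u`-parking function. -/
def IsUPF (u xs : List ℕ) : Prop :=
  xs.length = u.length ∧ (∀ x ∈ xs, 1 ≤ x) ∧
    ∀ i < u.length, (orderStats xs).getD i 0 ≤ u.getD i 0


lemma firstEmpty_none {occ : Finset ℕ} {M c : ℕ} (h : ∀ i, c ≤ i → i ≤ M → i ∈ occ) :
    firstEmpty occ M c = none := by
  rw [firstEmpty, List.find?_eq_none]
  intro j hj
  simp only [List.mem_range'_1] at hj
  simp only [decide_eq_true_eq, not_not]
  exact h j hj.1 (by omega)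

lemma firstEmpty_some {occ : Finset ℕ} {M c j : ℕ} (hcj : c ≤ j) (hjM : j ≤ M)
    (hocc : ∀ i, c ≤ i → i < j → i ∈ occ) (hj : j ∉ occ) :
    firstEmpty occ M c = some j := by
  induction' hd : j - c with d ih generalizing c
  · have hcj' : c = j := by omega
    rw [firstEmpty, hcj']
    have h1 : M + 1 - j = (M - j) + 1 := by omega
    rw [h1, List.range'_succ, List.find?_cons_of_pos]
    simpa using hj
  · rw [firstEmpty]
    have h1 : M + 1 - c = (M - c) + 1 := by omega
    rw [h1, List.range'_succ, List.find?_cons_of_neg]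
    · have h2 : M - c = M + 1 - (c+1) := by omega
      rw [h2]
      exact ih (by omega) (fun i h1 h2 => hocc i (by omega) h2) (by omega)
    · simp only [decide_eq_true_eq, not_not, Decidable.not_not]
      exact hocc c le_rfl (by omega)

def blockF (k z s : ℕ) : Finset ℕ := Finset.Ico (z + s*k) (z + s*k + k)

def occS (k z : ℕ) (S : Finset ℕ) : Finset ℕ := Finset.Ico 1 z ∪ S.biUnion (blockF k z)

def InA (n k z c : ℕ) : Prop := (1 ≤ c ∧ c ≤ z) ∨ ∃ s, 1 ≤ s ∧ s < n ∧ c = z + s*k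

def req (k z c : ℕ) : ℕ := (c - z) / k

def avail (n : ℕ) (S : Finset ℕ) (r : ℕ) : Finset ℕ := (Finset.range n \ S).filter (r ≤ ·)

lemma mem_occS {k z : ℕ} {S : Finset ℕ} {x : ℕ} :
    x ∈ occS k z S ↔ (1 ≤ x ∧ x < z) ∨ ∃ s ∈ S, z + s*k ≤ x ∧ x < z + s*k + k := by
  simp [occS, blockF, Finset.mem_union, Finset.mem_biUnion, Finset.mem_Ico]

lemma div_bounds (a : ℕ) {k : ℕ} (hk : 0 < k) : (a/k)*k ≤ a ∧ a < (a/k)*k + k := by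
  have h1 := Nat.div_add_mod a k
  have h2 := Nat.mod_lt a hk
  have h3 : k * (a / k) = (a / k) * k := Nat.mul_comm _ _
  omega

lemma div_eq_of_bounds {a k s : ℕ} (hk : 0 < k) (h1 : s * k ≤ a) (h2 : a < s*k + k) :
    a / k = s := by
  obtain ⟨hb1, hb2⟩ := div_bounds a hk
  rcases Nat.lt_trichotomy (a/k) s with h | h | h
  · have : (a/k + 1) * k ≤ s * k := Nat.mul_le_mul_right _ (by omega)
    have h4 : (a/k + 1) * k = (a/k)*k + k := by ring
    omega
  · exact h
  · have : s * k + k ≤ (a/k) * k := by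
      have h5 : (s+1) * k ≤ (a/k) * k := Nat.mul_le_mul_right _ (by omega)
      have h6 : (s+1) * k = s*k + k := by ring
      omega
    omega

lemma mem_avail {n : ℕ} {S : Finset ℕ} {r t : ℕ} :
    t ∈ avail n S r ↔ (t < n ∧ t ∉ S) ∧ r ≤ t := by
  simp [avail, Finset.mem_filter, Finset.mem_sdiff, Finset.mem_range]

lemma req_le_index {k z c i : ℕ} (hk : 0 < k) (hc : c ≤ z ∨ c = z + (req k z c)*k)
    (hci : c ≤ i) : req k z c ≤ (i - z) / k := by
  rcases hc with h | h
  · have h0 : req k z c = 0 := by simp [req, Nat.sub_eq_zero_of_le h]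
    simp [h0]
  · have h1 : (req k z c) * k ≤ i - z := by omega
    have h2 := Nat.div_le_div_right (c := k) h1
    rwa [Nat.mul_div_cancel _ hk] at h2

lemma InA_le {n k z c : ℕ} (hn : 0 < n) (hk : 0 < k) (hc : InA n k z c) :
    1 ≤ c ∧ c ≤ z + (req k z c)*k ∧ req k z c < n ∧ (c ≤ z ∨ c = z + (req k z c)*k) := by
  rcases hc with ⟨h1, h2⟩ | ⟨s, hs1, hs2, rfl⟩
  · have h0 : req k z c = 0 := by simp [req, Nat.sub_eq_zero_of_le h2]
    rw [h0]
    simp only [Nat.zero_mul]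
    omega
  · have h0 : req k z (z + s*k) = s := by simp [req, Nat.mul_div_cancel _ hk]
    rw [h0]
    have : 1*1 ≤ s*k := Nat.mul_le_mul hs1 hk
    omega

lemma park_step_some {n k z : ℕ} {S : Finset ℕ} {c t₀ : ℕ} (hn : 0 < n) (hk : 0 < k) (hz : 0 < z)
    (hS : S ⊆ Finset.range n) (hc : InA n k z c)
    (ht₀ : t₀ ∈ avail n S (req k z c))
    (hmin : ∀ t ∈ avail n S (req k z c), t₀ ≤ t) :
    firstEmpty (occS k z S) (z - 1 + n*k) c = some (z + t₀*k)
    ∧ (∀ i ∈ Finset.Ico (z + t₀*k) (z + t₀*k + k), i ∉ occS k z S)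
    ∧ z + t₀*k + k - 1 ≤ z - 1 + n*k
    ∧ occS k z S ∪ Finset.Ico (z + t₀*k) (z + t₀*k + k) = occS k z (insert t₀ S) := by
  obtain ⟨hc1, hc2, hc3, hc4⟩ := InA_le hn hk hc
  obtain ⟨⟨ht₀n, ht₀S⟩, ht₀r⟩ := mem_avail.1 ht₀
  have hmuln : t₀ * k + k ≤ n * k := by
    have h5 : (t₀ + 1) * k ≤ n * k := Nat.mul_le_mul_right _ (by omega)
    have h6 : (t₀+1) * k = t₀*k + k := by ring
    omega
  have hrt : (req k z c) * k ≤ t₀ * k := Nat.mul_le_mul_right _ ht₀r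
  have hjfree : ∀ i, z + t₀*k ≤ i → i < z + t₀*k + k → i ∉ occS k z S := by
    intro i hi1 hi2 hmem
    rw [mem_occS] at hmem
    rcases hmem with ⟨-, h2⟩ | ⟨s, hsS, hs1, hs2⟩
    · omega
    · have hidx : (i - z) / k = t₀ := div_eq_of_bounds hk (by omega) (by omega)
      have hidx' : (i - z) / k = s := div_eq_of_bounds hk (by omega) (by omega)
      exact ht₀S (by rwa [hidx'.symm.trans hidx] at hsS)
  have hocc : ∀ i, c ≤ i → i < z + t₀*k → i ∈ occS k z S := by
    intro i hi1 hi2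
    rw [mem_occS]
    rcases Nat.lt_or_ge i z with h' | h'
    · exact Or.inl ⟨by omega, h'⟩
    · right
      obtain ⟨hb1, hb2⟩ := div_bounds (i - z) hk
      have hst : (i-z)/k < t₀ := by
        by_contra hcon
        push_neg at hcon
        have : t₀ * k ≤ ((i-z)/k) * k := Nat.mul_le_mul_right _ hcon
        omega
      have hrs : req k z c ≤ (i-z)/k := req_le_index hk hc4 hi1
      have hsS : (i-z)/k ∈ S := by
        by_contra hcon
        have := hmin _ (mem_avail.2 ⟨⟨by omega, hcon⟩, hrs⟩)
        omega
      exact ⟨(i-z)/k, hsS, by omega, by omega⟩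
  refine ⟨?_, ?_, by omega, ?_⟩
  · exact firstEmpty_some (by omega) (by omega) hocc (hjfree _ le_rfl (by omega))
  · intro i hi
    rw [Finset.mem_Ico] at hi
    exact hjfree i hi.1 hi.2
  · ext x
    simp only [Finset.mem_union, mem_occS, Finset.mem_Ico, Finset.mem_insert]
    constructor
    · rintro ((h' | ⟨s, hsS, hs⟩) | h')
      · exact Or.inl h'
      · exact Or.inr ⟨s, Or.inr hsS, hs⟩
      · exact Or.inr ⟨t₀, Or.inl rfl, h'⟩
    · rintro (h' | ⟨s, (rfl | hsS), hs⟩)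
      · exact Or.inl (Or.inl h')
      · exact Or.inr hs
      · exact Or.inl (Or.inr ⟨s, hsS, hs⟩)

lemma park_step_none {n k z : ℕ} {S : Finset ℕ} {c : ℕ} (hn : 0 < n) (hk : 0 < k) (hz : 0 < z)
    (hc : InA n k z c) (h : ∀ t, t ∉ avail n S (req k z c)) :
    firstEmpty (occS k z S) (z - 1 + n*k) c = none := by
  obtain ⟨hc1, hc2, hc3, hc4⟩ := InA_le hn hk hc
  apply firstEmpty_none
  intro i hi1 hi2
  rw [mem_occS]
  rcases Nat.lt_or_ge i z with h' | h'
  · exact Or.inl ⟨by omega, h'⟩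
  · right
    obtain ⟨hb1, hb2⟩ := div_bounds (i - z) hk
    have hsn : (i-z)/k < n := by
      by_contra hcon
      push_neg at hcon
      have h5 : n * k ≤ ((i-z)/k) * k := Nat.mul_le_mul_right _ hcon
      omega
    have hrs : req k z c ≤ (i-z)/k := req_le_index hk hc4 hi1
    have hsS : (i-z)/k ∈ S := by
      by_contra hcon
      exact h _ (mem_avail.2 ⟨⟨hsn, hcon⟩, hrs⟩)
    exact ⟨(i-z)/k, hsS, by omega, by omega⟩

def slotOk (n : ℕ) : Finset ℕ → List ℕ → Prop
  | _, [] => True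
  | S, r :: rs => ∃ h : (avail n S r).Nonempty, slotOk n (insert ((avail n S r).min' h) S) rs

def Cond (n : ℕ) (rs : List ℕ) : Prop :=
  ∀ t, (rs.filter (fun r => t ≤ r)).length ≤ n - t

lemma slotOk_assign {n : ℕ} : ∀ {rs : List ℕ} {S : Finset ℕ}, slotOk n S rs →
    ∃ ts : List ℕ, ts.Nodup ∧ List.Forall₂ (· ≤ ·) rs ts ∧ ∀ t ∈ ts, t < n ∧ t ∉ S := by
  intro rs
  induction rs with
  | nil => exact fun _ => ⟨[], by simp⟩
  | cons r rs ih =>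
    intro S hok
    obtain ⟨h, hok'⟩ := hok
    obtain ⟨ts, h1, h2, h3⟩ := ih hok'
    set t₀ := (avail n S r).min' h with ht₀
    obtain ⟨⟨ht₀n, ht₀S⟩, ht₀r⟩ := mem_avail.1 (Finset.min'_mem _ h)
    refine ⟨t₀ :: ts, ?_, List.Forall₂.cons ht₀r h2, ?_⟩
    · refine List.nodup_cons.2 ⟨fun hmem => ?_, h1⟩
      exact (h3 _ hmem).2 (Finset.mem_insert_self _ _)
    · intro t ht
      rcases List.mem_cons.1 ht with h' | ht'
      · rw [h']; exact ⟨ht₀n, ht₀S⟩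
      · exact ⟨(h3 t ht').1, fun hS => (h3 t ht').2 (Finset.mem_insert_of_mem hS)⟩

lemma forall₂_filter_length {rs ts : List ℕ} (h : List.Forall₂ (· ≤ ·) rs ts) (t : ℕ) :
    (rs.filter (fun r => t ≤ r)).length ≤ (ts.filter (fun r => t ≤ r)).length := by
  induction h with
  | nil => simp
  | cons hab hl ih =>
    rename_i a b l₁ l₂
    rw [List.filter_cons, List.filter_cons]
    by_cases h1 : t ≤ a
    · rw [if_pos (by simpa using h1), if_pos (by simpa using le_trans h1 hab)]
      simpa using ih
    · rw [if_neg (by simpa using h1)]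
      by_cases h2 : t ≤ b
      · rw [if_pos (by simpa using h2)]
        simp only [List.length_cons]
        omega
      · rw [if_neg (by simpa using h2)]
        exact ih

lemma nodup_filter_length {ts : List ℕ} {n : ℕ} (h1 : ts.Nodup) (h2 : ∀ t ∈ ts, t < n)
    (t : ℕ) : (ts.filter (fun r => t ≤ r)).length ≤ n - t := by
  have hnd : (ts.filter (fun r => t ≤ r)).Nodup := h1.filter _
  rw [← List.toFinset_card_of_nodup hnd]
  have hsub : (ts.filter (fun r => t ≤ r)).toFinset ⊆ Finset.Ico t n := by
    intro x hx
    rw [List.mem_toFinset, List.mem_filter] at hx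
    exact Finset.mem_Ico.2 ⟨by simpa using hx.2, h2 _ hx.1⟩
  simpa [Nat.card_Ico] using Finset.card_le_card hsub

lemma slotOk_cond {n : ℕ} {rs : List ℕ} (h : slotOk n ∅ rs) : Cond n rs := by
  obtain ⟨ts, h1, h2, h3⟩ := slotOk_assign h
  intro t
  exact le_trans (forall₂_filter_length h2 t) (nodup_filter_length h1 (fun t ht => (h3 t ht).1) t)

lemma filter_length_anti {l : List ℕ} {t t' : ℕ} (h : t' ≤ t) :
    (l.filter (fun r => t ≤ r)).length ≤ (l.filter (fun r => t' ≤ r)).length := by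
  rw [← List.countP_eq_length_filter, ← List.countP_eq_length_filter]
  apply List.countP_mono_left
  intro a _ ha
  simpa using le_trans h (by simpa using ha)

lemma cond_slotOk {n : ℕ} : ∀ {rs : List ℕ} {S : Finset ℕ}, S ⊆ Finset.range n →
    (∀ t, (rs.filter (fun r => t ≤ r)).length + (S.filter (fun x => t ≤ x)).card ≤ n - t) →
    slotOk n S rs := by
  intro rs
  induction rs with
  | nil => exact fun _ _ => trivial
  | cons r rs ih =>
    intro S hS hinv
    have hne : (avail n S r).Nonempty := by
      by_contra hcon
      rw [Finset.not_nonempty_iff_eq_empty] at hcon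
      have hsub : Finset.Ico r n ⊆ S.filter (fun x => r ≤ x) := by
        intro u hu
        rw [Finset.mem_Ico] at hu
        rw [Finset.mem_filter]
        refine ⟨?_, by simpa using hu.1⟩
        by_contra hu2
        have : u ∈ avail n S r := mem_avail.2 ⟨⟨hu.2, hu2⟩, hu.1⟩
        simp [hcon] at this
      have hcard := Finset.card_le_card hsub
      rw [Nat.card_Ico] at hcard
      have h0 := hinv r
      rw [List.filter_cons_of_pos (by simp)] at h0
      simp only [List.length_cons] at h0
      omega
    refine ⟨hne, ih ?_ ?_⟩
    · intro x hx
      rcases Finset.mem_insert.1 hx with rfl | hx'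
      · exact Finset.mem_range.2 (mem_avail.1 (Finset.min'_mem _ hne)).1.1
      · exact hS hx'
    · set t₀ := (avail n S r).min' hne with ht₀def
      obtain ⟨⟨ht₀n, ht₀S⟩, ht₀r⟩ := mem_avail.1 (Finset.min'_mem _ hne)
      have hmin : ∀ t ∈ avail n S r, t₀ ≤ t := fun t ht => Finset.min'_le _ t ht
      intro t
      have hcard : ((insert t₀ S).filter (fun x => t ≤ x)).card
          = (S.filter (fun x => t ≤ x)).card + (if t ≤ t₀ then 1 else 0) := by
        rw [Finset.filter_insert]
        by_cases h1 : t ≤ t₀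
        · rw [if_pos h1, if_pos h1, Finset.card_insert_of_notMem]
          intro hmem
          exact ht₀S (Finset.mem_filter.1 hmem).1
        · rw [if_neg h1, if_neg h1]
          omega
      rcases le_or_gt t r with h1 | h1
      · have h0 := hinv t
        rw [List.filter_cons_of_pos (by simpa using h1)] at h0
        simp only [List.length_cons] at h0
        rw [hcard, if_pos (le_trans h1 ht₀r)]
        omega
      · rcases le_or_gt t t₀ with h2 | h2
        · -- r < t ≤ t₀
          have hIco : Finset.Ico r t ⊆ S := by
            intro u hu
            rw [Finset.mem_Ico] at hu
            by_contra hu2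
            have : u ∈ avail n S r := mem_avail.2 ⟨⟨by omega, hu2⟩, hu.1⟩
            have := hmin u this
            omega
          have hsub : (S.filter (fun x => t ≤ x)) ∪ Finset.Ico r t
              ⊆ S.filter (fun x => r ≤ x) := by
            intro u hu
            rcases Finset.mem_union.1 hu with hu' | hu'
            · rw [Finset.mem_filter] at hu' ⊢
              have := hu'.2
              exact ⟨hu'.1, by omega⟩
            · rw [Finset.mem_filter]
              rw [Finset.mem_Ico] at hu'
              exact ⟨hIco (Finset.mem_Ico.2 hu'), hu'.1⟩
          have hdisj : Disjoint (S.filter (fun x => t ≤ x)) (Finset.Ico r t) := by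
            rw [Finset.disjoint_left]
            intro u hu1 hu2
            rw [Finset.mem_filter] at hu1
            rw [Finset.mem_Ico] at hu2
            have := hu1.2
            omega
          have hcard2 : (S.filter (fun x => t ≤ x)).card + (t - r)
              ≤ (S.filter (fun x => r ≤ x)).card := by
            have := Finset.card_le_card hsub
            rw [Finset.card_union_of_disjoint hdisj, Nat.card_Ico] at this
            omega
          have h0 := hinv r
          rw [List.filter_cons_of_pos (by simp)] at h0
          simp only [List.length_cons] at h0
          have hmono : (rs.filter (fun r' => t ≤ r')).length
              ≤ (rs.filter (fun r' => r ≤ r')).length := filter_length_anti (le_of_lt h1)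
          rw [hcard, if_pos h2]
          omega
        · -- t₀ < t
          have h0 := hinv t
          rw [List.filter_cons_of_neg (by simpa using h1.not_ge)] at h0
          rw [hcard, if_neg h2.not_ge]
          omega

lemma occS_empty {k z : ℕ} : occS k z ∅ = Finset.Ico 1 z := by
  simp [occS]

lemma slotOk_cons_iff {n : ℕ} {S : Finset ℕ} {r : ℕ} {rs : List ℕ}
    (hne : (avail n S r).Nonempty) :
    slotOk n S (r :: rs) ↔ slotOk n (insert ((avail n S r).min' hne) S) rs := by
  constructor
  · rintro ⟨h', hp⟩
    exact hp
  · intro hp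
    exact ⟨hne, hp⟩

lemma corr {n k z : ℕ} (hn : 0 < n) (hk : 0 < k) (hz : 0 < z) :
    ∀ (cs : List ℕ) (S : Finset ℕ), S ⊆ Finset.range n → (∀ c ∈ cs, InA n k z c) →
    ((parkAux (z - 1 + n*k) (occS k z S) cs (List.replicate cs.length k)).isSome = true
      ↔ slotOk n S (cs.map (req k z))) := by
  intro cs
  induction cs with
  | nil => intro S _ _; simp [parkAux, slotOk]
  | cons c cs ih =>
    intro S hS hA
    have hrep : List.replicate (c :: cs).length k = k :: List.replicate cs.length k := by
      simp [List.replicate_succ]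
    rw [hrep]
    by_cases hne : (avail n S (req k z c)).Nonempty
    · obtain ⟨hfe, hfree, hfit, hocc⟩ := park_step_some hn hk hz hS (hA c (by simp))
        (Finset.min'_mem _ hne) (fun t ht => Finset.min'_le _ t ht)
      rw [List.map_cons, slotOk_cons_iff hne]
      rw [show parkAux (z - 1 + n*k) (occS k z S) (c :: cs) (k :: List.replicate cs.length k)
          = (parkAux (z - 1 + n*k)
              (occS k z S ∪ Finset.Ico (z + ((avail n S (req k z c)).min' hne)*k)
                (z + ((avail n S (req k z c)).min' hne)*k + k)) cs
              (List.replicate cs.length k)).map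
              ((z + ((avail n S (req k z c)).min' hne)*k) :: ·) from by
        rw [parkAux, hfe]
        exact if_pos ⟨hfree, hfit⟩]
      rw [hocc]
      simp only [Option.isSome_map]
      apply ih
      · intro x hx
        rcases Finset.mem_insert.1 hx with rfl | hx'
        · exact Finset.mem_range.2 (mem_avail.1 (Finset.min'_mem _ hne)).1.1
        · exact hS hx'
      · intro c' hc'
        exact hA c' (by simp [hc'])
    · have hfe := park_step_none hn hk hz (hA c (by simp))
        (fun t ht => hne ⟨t, ht⟩)
      rw [show parkAux (z - 1 + n*k) (occS k z S) (c :: cs) (k :: List.replicate cs.length k)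
          = none from by rw [parkAux, hfe]]
      simp only [Option.isSome_none, Bool.false_eq_true, false_iff]
      rintro ⟨h', -⟩
      exact hne h'

def unionList (Bs : List (Finset ℕ)) : Finset ℕ := Bs.foldr (· ∪ ·) ∅

lemma mem_unionList {Bs : List (Finset ℕ)} {x : ℕ} :
    x ∈ unionList Bs ↔ ∃ B ∈ Bs, x ∈ B := by
  induction Bs with
  | nil => simp [unionList]
  | cons B Bs ih => simp [unionList, Finset.mem_union, ih.symm]

lemma card_unionList {Bs : List (Finset ℕ)} {q : ℕ} (h : Bs.Pairwise Disjoint)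
    (hc : ∀ B ∈ Bs, B.card = q) : (unionList Bs).card = q * Bs.length := by
  induction Bs with
  | nil => simp [unionList]
  | cons B Bs ih =>
    rw [List.pairwise_cons] at h
    have hdisj : Disjoint B (unionList Bs) := by
      rw [Finset.disjoint_left]
      intro x hx hx'
      obtain ⟨B', hB', hxB'⟩ := mem_unionList.1 hx'
      exact (Finset.disjoint_left.1 (h.1 B' hB')) hx hxB'
    have : unionList (B :: Bs) = B ∪ unionList Bs := rfl
    rw [this, Finset.card_union_of_disjoint hdisj, ih h.2 (fun B' hB' => hc B' (by simp [hB'])),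
      hc B (by simp), List.length_cons]
    ring

lemma firstEmpty_le {occ : Finset ℕ} {M c j : ℕ} (h : firstEmpty occ M c = some j) :
    c ≤ j := by
  have := List.mem_of_find?_eq_some h
  rw [List.mem_range'_1] at this
  exact this.1

lemma parkAux_sound {k : ℕ} (hk : 0 < k) (Mv : ℕ) : ∀ (cs : List ℕ) (occ : Finset ℕ)
    (l : List ℕ), (∀ c ∈ cs, 1 ≤ c) →
    parkAux Mv occ cs (List.replicate cs.length k) = some l →
    ∃ Bs : List (Finset ℕ), Bs.length = cs.length ∧
      (∀ B ∈ Bs, (∃ a, 0 < a ∧ a + k - 1 ≤ Mv ∧ B = Finset.Ico a (a+k)) ∧ Disjoint B occ) ∧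
      Bs.Pairwise Disjoint := by
  intro cs
  induction cs with
  | nil => intro occ l _ _; exact ⟨[], by simp⟩
  | cons c cs ih =>
    intro occ l hpos h
    rw [show List.replicate (c :: cs).length k = k :: List.replicate cs.length k from by
      simp [List.replicate_succ]] at h
    rw [parkAux] at h
    rcases hfe : firstEmpty occ Mv c with _ | j
    · rw [hfe] at h; simp at h
    · rw [hfe] at h
      simp only at h
      by_cases hcond : (∀ i ∈ Finset.Ico j (j + k), i ∉ occ) ∧ j + k - 1 ≤ Mv
      · rw [if_pos hcond] at h
        obtain ⟨l', hl', -⟩ := Option.map_eq_some_iff.1 h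
        obtain ⟨Bs, hlen, hprop, hpair⟩ := ih _ l' (fun c' hc' => hpos c' (by simp [hc'])) hl'
        refine ⟨Finset.Ico j (j+k) :: Bs, by simp [hlen], ?_, ?_⟩
        · intro B hB
          rcases List.mem_cons.1 hB with rfl | hB'
          · refine ⟨⟨j, ?_, hcond.2, rfl⟩, ?_⟩
            · have := firstEmpty_le hfe
              have := hpos c (by simp)
              omega
            · rw [Finset.disjoint_left]
              intro x hx
              exact hcond.1 x hx
          · obtain ⟨hshape, hdisj⟩ := hprop B hB'
            refine ⟨hshape, ?_⟩
            exact Finset.disjoint_of_subset_right Finset.subset_union_left hdisj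
        · rw [List.pairwise_cons]
          refine ⟨?_, hpair⟩
          intro B' hB'
          have := (hprop B' hB').2
          exact (Finset.disjoint_of_subset_right Finset.subset_union_right this).symm
      · rw [if_neg hcond] at h; simp at h

lemma noPark {n k z c : ℕ} (hn : 0 < n) (hk : 0 < k) (hz : 0 < z) (hzc : z < c)
    (hmod : (c - z) % k ≠ 0) (hcM : c + k - 1 ≤ z - 1 + n*k) :
    ∀ (cs : List ℕ) (l : List ℕ), cs.length = n - 1 → (∀ c' ∈ cs, 1 ≤ c') →
    parkAux (z - 1 + n*k) (Finset.Ico 1 z ∪ Finset.Ico c (c+k)) cs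
      (List.replicate (n-1) k) ≠ some l := by
  intro cs l hlen hpos h
  rw [← hlen] at h
  obtain ⟨Bs, hBlen, hprop, hpair⟩ := parkAux_sound hk _ cs _ l hpos h
  obtain ⟨s, d, hcd, hdk, hd1⟩ : ∃ s d, c = z + s*k + d ∧ d < k ∧ 1 ≤ d := by
    refine ⟨(c-z)/k, (c-z)%k, ?_, Nat.mod_lt _ hk, Nat.one_le_iff_ne_zero.2 hmod⟩
    have h1 := Nat.div_add_mod (c - z) k
    have h2 : k * ((c-z)/k) = ((c-z)/k) * k := Nat.mul_comm _ _
    omega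
  -- s + 1 < n
  obtain ⟨m, hm⟩ : ∃ m, n = s + 1 + m ∧ 1 ≤ m := by
    have h1 : s * k + d + k ≤ n * k := by omega
    have h2 : s + 2 ≤ n := by
      by_contra hcon
      push_neg at hcon
      have : n * k ≤ (s+1) * k := Nat.mul_le_mul_right _ (by omega)
      have he : (s+1)*k = s*k + k := by ring
      omega
    exact ⟨n - s - 1, by omega⟩
  -- each block is in R1 or R2
  have hsplit : ∀ B ∈ Bs, B ⊆ Finset.Ico z c ∨ B ⊆ Finset.Ico (c+k) (z + n*k) := by
    intro B hB
    obtain ⟨⟨a, ha1, ha2, rfl⟩, hdisj⟩ := hprop B hB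
    have haz : z ≤ a := by
      have : a ∉ Finset.Ico 1 z := fun hmem =>
        (Finset.disjoint_left.1 hdisj) (Finset.mem_Ico.2 ⟨le_rfl, by omega⟩)
          (Finset.mem_union_left _ hmem)
      rw [Finset.mem_Ico] at this
      omega
    have hac : a ∉ Finset.Ico c (c+k) := fun hmem =>
      (Finset.disjoint_left.1 hdisj) (Finset.mem_Ico.2 ⟨le_rfl, by omega⟩)
        (Finset.mem_union_right _ hmem)
    rw [Finset.mem_Ico] at hac
    rcases lt_or_ge a c with h' | h'
    · left
      have hcB : c ∉ Finset.Ico a (a+k) := fun hmem =>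
        (Finset.disjoint_left.1 hdisj) hmem
          (Finset.mem_union_right _ (Finset.mem_Ico.2 ⟨le_rfl, by omega⟩))
      rw [Finset.mem_Ico] at hcB
      intro x hx
      rw [Finset.mem_Ico] at hx ⊢
      omega
    · right
      intro x hx
      rw [Finset.mem_Ico] at hx ⊢
      omega
  -- partition
  classical
  set Bs1 := Bs.filter (fun B => decide (B ⊆ Finset.Ico z c)) with hBs1
  set Bs2 := Bs.filter (fun B => ! decide (B ⊆ Finset.Ico z c)) with hBs2
  have hlensum : Bs1.length + Bs2.length = Bs.length := by
    rw [hBs1, hBs2]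
    have := List.filter_append_perm (fun B => decide (B ⊆ Finset.Ico z c)) Bs
    have := this.length_eq
    simp only [List.length_append] at this
    omega
  have hcardk : ∀ B ∈ Bs, B.card = k := by
    intro B hB
    obtain ⟨⟨a, _, _, rfl⟩, -⟩ := hprop B hB
    rw [Nat.card_Ico]
    omega
  have hsub1 : ∀ B ∈ Bs1, B ∈ Bs := fun B hB => List.mem_of_mem_filter hB
  have hsub2 : ∀ B ∈ Bs2, B ∈ Bs := fun B hB => List.mem_of_mem_filter hB
  have hcard1 : (unionList Bs1).card = k * Bs1.length :=
    card_unionList (hpair.sublist List.filter_sublist) (fun B hB => hcardk B (hsub1 B hB))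
  have hcard2 : (unionList Bs2).card = k * Bs2.length :=
    card_unionList (hpair.sublist List.filter_sublist) (fun B hB => hcardk B (hsub2 B hB))
  have hU1 : unionList Bs1 ⊆ Finset.Ico z c := by
    intro x hx
    obtain ⟨B, hB, hxB⟩ := mem_unionList.1 hx
    have := List.of_mem_filter hB
    simp only [decide_eq_true_eq] at this
    exact this hxB
  have hU2 : unionList Bs2 ⊆ Finset.Ico (c+k) (z+n*k) := by
    intro x hx
    obtain ⟨B, hB, hxB⟩ := mem_unionList.1 hx
    have hnr1 := List.of_mem_filter hB
    simp only [Bool.not_eq_true', decide_eq_false_iff_not] at hnr1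
    rcases hsplit B (hsub2 B hB) with h' | h'
    · exact absurd h' hnr1
    · exact h' hxB
  have hle1 : k * Bs1.length ≤ s * k + d := by
    have := Finset.card_le_card hU1
    rw [hcard1, Nat.card_Ico] at this
    omega
  have hle2 : k * Bs2.length + d ≤ m * k := by
    have := Finset.card_le_card hU2
    rw [hcard2, Nat.card_Ico] at this
    have he : z + n * k = (c + k) + (m * k - d) := by
      have he1 : n * k = (s + 1 + m) * k := by rw [hm.1]
      have he2 : (s+1+m)*k = s*k + k + m*k := by ring
      have he3 : 1*k ≤ m*k := Nat.mul_le_mul_right _ hm.2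
      omega
    have he3 : 1*k ≤ m*k := Nat.mul_le_mul_right _ hm.2
    omega
  have ht1 : Bs1.length ≤ s := by
    by_contra hcon
    push_neg at hcon
    have h5 : k * (s+1) ≤ k * Bs1.length := Nat.mul_le_mul_left _ hcon
    have h6 : k * (s+1) = s*k + k := by ring
    omega
  have ht2 : Bs2.length + 1 ≤ m := by
    by_contra hcon
    push_neg at hcon
    have h5 : k * m ≤ k * Bs2.length := Nat.mul_le_mul_left _ (by omega)
    have h6 : k * m = m * k := by ring
    omega
  rw [hBlen, hlen] at hlensum
  omega

lemma head_mem_A {n k z c : ℕ} (hn : 0 < n) (hk2 : 2 ≤ k) (hz : 0 < z) (hc1 : 1 ≤ c)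
    {rest : List ℕ} (hrest : rest.length = n - 1) (hrpos : ∀ c' ∈ rest, 1 ≤ c')
    (hpark : (parkAux (z - 1 + n*k) (Finset.Ico 1 z) (c :: rest)
      (List.replicate n k)).isSome = true) :
    InA n k z c := by
  have hk : 0 < k := by omega
  rcases le_or_gt c z with hcz | hcz
  · exact Or.inl ⟨hc1, hcz⟩
  rw [show List.replicate n k = k :: List.replicate (n-1) k from by
    rw [← List.replicate_succ]; congr 1; omega] at hpark
  rw [parkAux] at hpark
  by_cases hM : c ≤ z - 1 + n*k
  · have hfe : firstEmpty (Finset.Ico 1 z) (z - 1 + n*k) c = some c := by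
      apply firstEmpty_some le_rfl hM
      · intro i h1 h2
        exact (by omega : False).elim
      · intro hmem
        rw [Finset.mem_Ico] at hmem
        omega
    rw [hfe] at hpark
    simp only at hpark
    by_cases hfit : c + k - 1 ≤ z - 1 + n*k
    · rw [if_pos ⟨by
        intro i hi hmem
        rw [Finset.mem_Ico] at hi hmem
        omega, hfit⟩] at hpark
      rw [Option.isSome_map] at hpark
      rw [Option.isSome_iff_exists] at hpark
      obtain ⟨l, hl⟩ := hpark
      by_cases hmod : (c - z) % k = 0
      · right
        have hdm := Nat.div_add_mod (c - z) k
        have hcomm : k * ((c-z)/k) = ((c-z)/k) * k := Nat.mul_comm _ _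
        refine ⟨(c - z)/k, ?_, ?_, by omega⟩
        · by_contra hcon
          push_neg at hcon
          interval_cases h : (c - z)/k
          omega
        · have h1 : ((c-z)/k + 1) * k ≤ n * k := by
            have : ((c-z)/k + 1) * k = (c-z)/k * k + k := by ring
            omega
          have := Nat.le_of_mul_le_mul_right h1 hk
          omega
      · exact absurd hl (noPark hn hk hz hcz hmod hfit rest l hrest hrpos)
    · rw [if_neg (fun hcc => hfit hcc.2)] at hpark
      simp at hpark
  · have hfe : firstEmpty (Finset.Ico 1 z) (z - 1 + n*k) c = none := by
      apply firstEmpty_none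
      intro i h1 h2
      exact (by omega : False).elim
    rw [hfe] at hpark
    simp at hpark

theorem char {n k z : ℕ} (hn : 0 < n) (hk2 : 2 ≤ k) (hz : 0 < z) (cs : List ℕ) :
    PermInvariant (List.replicate n k) cs z ↔
      cs.length = n ∧ (∀ c ∈ cs, InA n k z c) ∧ Cond n (cs.map (req k z)) := by
  have hk : 0 < k := by omega
  have hsum : (List.replicate n k).sum = n * k := by
    rw [List.sum_replicate, smul_eq_mul]
  constructor
  · intro h
    obtain ⟨hlen, hpos, hsome⟩ := h cs (List.Perm.refl cs)
    rw [List.length_replicate] at hlen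
    have hA : ∀ c ∈ cs, InA n k z c := by
      intro c hc
      obtain ⟨hlen', hpos', hsome'⟩ := h (c :: cs.erase c) (List.perm_cons_erase hc).symm
      rw [List.length_replicate, List.length_cons] at hlen'
      rw [parkResult, hsum] at hsome'
      exact head_mem_A hn hk2 hz (hpos' c (by simp))
        (by have := List.length_erase_of_mem hc; omega)
        (fun c' hc' => hpos' c' (by simp [hc'])) hsome'
    refine ⟨hlen, hA, ?_⟩
    apply slotOk_cond
    rw [← corr hn hk hz cs ∅ (by simp) hA, occS_empty, hlen]
    rw [parkResult, hsum] at hsome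
    exact hsome
  · rintro ⟨hlen, hA, hcond⟩ cs' hperm
    have hlen' : cs'.length = n := by rw [hperm.length_eq, hlen]
    have hA' : ∀ c ∈ cs', InA n k z c := fun c hc => hA c (hperm.mem_iff.1 hc)
    refine ⟨by rw [hlen', List.length_replicate], ?_, ?_⟩
    · intro c hc
      exact (InA_le hn hk (hA' c hc)).1
    · rw [parkResult, hsum, show Finset.Ico 1 z = occS k z ∅ from occS_empty.symm,
        show List.replicate n k = List.replicate cs'.length k from by rw [hlen']]
      rw [corr hn hk hz cs' ∅ (by simp) hA']
      apply cond_slotOk (by simp)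
      intro t
      simp only [Finset.filter_empty, Finset.card_empty, Nat.add_zero]
      rw [((hperm.map (req k z)).filter _).length_eq]
      exact hcond t

def RecP (G : ℕ → ℤ) (b : ℕ) : Prop := ∀ t < b, G b < G t

instance (G : ℕ → ℤ) : DecidablePred (RecP G) := fun b => Nat.decidableBallLT b _

lemma rec_count {G : ℕ → ℤ} {m z : ℕ} (hm : 0 < m) (hz : 0 < z) (h0 : G 0 = 0)
    (hstep : ∀ t, G t - 1 ≤ G (t+1)) (hper : ∀ t, G (t + m) = G t - z) :
    ((Finset.Ico (m+1) (2*m+1)).filter (RecP G)).card = z := by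
  have hne : ((Finset.range (m+1)).image G).Nonempty :=
    ⟨G 0, Finset.mem_image_of_mem _ (Finset.mem_range.2 (by omega))⟩
  set μ := ((Finset.range (m+1)).image G).min' hne with hμ
  have hμle : ∀ t, t ≤ m → μ ≤ G t := fun t ht =>
    Finset.min'_le _ _ (Finset.mem_image_of_mem _ (Finset.mem_range.2 (by omega)))
  obtain ⟨tstar, htm, htμ⟩ : ∃ t ∈ Finset.range (m+1), G t = μ := by
    have := Finset.min'_mem _ hne
    rwa [← hμ, Finset.mem_image] at this
  rw [Finset.mem_range] at htm
  have hμ0 : μ ≤ 0 := h0 ▸ hμle 0 (by omega)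
  have hdown : ∀ j : ℕ, G (tstar + j*m) = μ - j*z := by
    intro j
    induction j with
    | zero => simpa using htμ
    | succ j ih =>
      have : tstar + (j+1)*m = (tstar + j*m) + m := by ring
      rw [this, hper, ih]
      push_cast
      ring
  have hex : ∀ v : ℤ, ∃ t, G t ≤ v := by
    intro v
    refine ⟨tstar + ((μ - v).toNat + 1)*m, ?_⟩
    rw [hdown]
    have h1 : (μ - v : ℤ) ≤ ((μ - v).toNat : ℤ) := Int.self_le_toNat _
    have h2 : (1 : ℤ) ≤ z := by exact_mod_cast hz
    push_cast
    have h3 : (0:ℤ) ≤ ((μ - v).toNat : ℤ) := Int.natCast_nonneg _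
    nlinarith
  have hfacts : ∀ v : ℤ, μ - z ≤ v → v ≤ μ - 1 →
      G (Nat.find (hex v)) = v ∧ m < Nat.find (hex v) ∧ Nat.find (hex v) ≤ 2*m := by
    intro v hv1 hv2
    set b := Nat.find (hex v) with hbdef
    have hspec : G b ≤ v := Nat.find_spec (hex v)
    have hmin : ∀ t, t < b → ¬ G t ≤ v := fun t ht => Nat.find_min (hex v) ht
    have hb_gt : m < b := by
      by_contra hcon
      push_neg at hcon
      have := hμle b hcon
      omega
    have hb_le : b ≤ tstar + m := Nat.find_le (by rw [hper, htμ]; omega)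
    have hGb : G b = v := by
      have h1 : ¬ G (b - 1) ≤ v := hmin (b-1) (by omega)
      have h2 := hstep (b-1)
      rw [show b - 1 + 1 = b by omega] at h2
      omega
    exact ⟨hGb, hb_gt, by omega⟩
  have hcard : ((Finset.Ico (m+1) (2*m+1)).filter (RecP G)).card
      = (Finset.Icc (μ - z) (μ - 1) : Finset ℤ).card := by
    apply Finset.card_bij' (i := fun b _ => G b) (j := fun v _ => Nat.find (hex v))
    · -- hi : G b ∈ Icc
      intro b hb
      rw [Finset.mem_filter, Finset.mem_Ico] at hb
      obtain ⟨⟨hb1, hb2⟩, hrec⟩ := hb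
      rw [Finset.mem_Icc]
      constructor
      · have h3 := hper (b - m)
        rw [show b - m + m = b by omega] at h3
        have := hμle (b - m) (by omega)
        omega
      · have := hrec tstar (by omega)
        omega
    · -- hj : Nat.find ∈ filter
      intro v hv
      rw [Finset.mem_Icc] at hv
      obtain ⟨hGb, hb_gt, hb_le⟩ := hfacts v hv.1 hv.2
      rw [Finset.mem_filter, Finset.mem_Ico]
      refine ⟨⟨by omega, by omega⟩, ?_⟩
      intro t ht
      have := Nat.find_min (hex v) ht
      omega
    · -- left_inv : Nat.find (hex (G b)) = b
      intro b hb
      rw [Finset.mem_filter, Finset.mem_Ico] at hb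
      rw [Nat.find_eq_iff]
      exact ⟨le_rfl, fun t ht => by
        have := hb.2 t ht
        omega⟩
    · -- right_inv : G (Nat.find (hex v)) = v
      intro v hv
      rw [Finset.mem_Icc] at hv
      exact (hfacts v hv.1 hv.2).1
  rw [hcard, Int.card_Icc]
  rw [show μ - 1 + 1 - (μ - z) = (z : ℤ) by ring]
  exact Int.toNat_natCast z

def cntF (n z : ℕ) (f : Fin n → ZMod (n+z)) (w : ℕ) : ℕ :=
  (Finset.univ.filter fun i => f i = (w : ZMod (n+z))).card

def GF (n z : ℕ) (f : Fin n → ZMod (n+z)) (t : ℕ) : ℤ :=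
  (∑ j ∈ Finset.range t, (cntF n z f j : ℤ)) - t

def GoodF (n z : ℕ) (f : Fin n → ZMod (n+z)) : Prop :=
  ∀ s < n + z, (s:ℤ) + 1 - z ≤ ((Finset.univ.filter fun i => (f i).val < s).card : ℤ)

instance (n z : ℕ) : DecidablePred (GoodF n z) := fun _ => Nat.decidableBallLT _ _

lemma val_eq_iff {m : ℕ} [NeZero m] (a : ZMod m) (j : ℕ) (hj : j < m) :
    a.val = j ↔ a = (j : ZMod m) := by
  constructor
  · intro h
    have := ZMod.natCast_rightInverse (n := m) a
    rw [← this, h]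
  · intro h
    rw [h, ZMod.val_cast_of_lt hj]

lemma cntF_period {n z : ℕ} (hnz : 0 < n + z) (f : Fin n → ZMod (n+z)) (w : ℕ) :
    cntF n z f (w + (n+z)) = cntF n z f w := by
  unfold cntF
  congr 1
  apply Finset.filter_congr
  intro i _
  have h : ((w + (n+z) : ℕ) : ZMod (n+z)) = (w : ZMod (n+z)) := by
    rw [Nat.cast_add, ZMod.natCast_self, add_zero]
  rw [h]

lemma sum_cntF {n z : ℕ} (hnz : 0 < n + z) (f : Fin n → ZMod (n+z)) :
    ∑ j ∈ Finset.range (n+z), cntF n z f j = n := by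
  haveI : NeZero (n+z) := ⟨by omega⟩
  have h := Finset.card_eq_sum_card_fiberwise
    (f := fun i : Fin n => (f i).val) (s := Finset.univ) (t := Finset.range (n+z))
    (fun i _ => Finset.mem_range.2 (ZMod.val_lt _))
  rw [Finset.card_univ, Fintype.card_fin] at h
  refine Eq.trans ?_ h.symm
  apply Finset.sum_congr rfl
  intro j hj
  rw [Finset.mem_range] at hj
  unfold cntF
  congr 1
  apply Finset.filter_congr
  intro i _
  exact (val_eq_iff (f i) j hj).symm

lemma sum_cntF_add {n z : ℕ} (f : Fin n → ZMod (n+z)) (b s : ℕ) :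
    ∑ j ∈ Finset.range (b + s), cntF n z f j
      = (∑ j ∈ Finset.range b, cntF n z f j) + ∑ v ∈ Finset.range s, cntF n z f (b + v) := by
  induction s with
  | zero => simp
  | succ s ih =>
    rw [show b + (s+1) = (b+s)+1 by ring, Finset.sum_range_succ, ih, Finset.sum_range_succ]
    ring

lemma GF_step {n z : ℕ} (f : Fin n → ZMod (n+z)) (t : ℕ) :
    GF n z f t - 1 ≤ GF n z f (t+1) := by
  unfold GF
  rw [Finset.sum_range_succ]
  push_cast
  have : (0:ℤ) ≤ cntF n z f t := by positivity
  omega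

lemma sum_cntF_shift {n z : ℕ} (hnz : 0 < n + z) (f : Fin n → ZMod (n+z)) (t : ℕ) :
    ∑ j ∈ Finset.range (t + (n+z)), cntF n z f j
      = (∑ j ∈ Finset.range t, cntF n z f j) + n := by
  induction t with
  | zero => simpa using sum_cntF hnz f
  | succ t ih =>
    rw [show t + 1 + (n+z) = (t + (n+z)) + 1 by ring, Finset.sum_range_succ, ih,
      cntF_period hnz, Finset.sum_range_succ]
    ring

lemma GF_per {n z : ℕ} (hnz : 0 < n + z) (f : Fin n → ZMod (n+z)) (t : ℕ) :
    GF n z f (t + (n+z)) = GF n z f t - z := by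
  unfold GF
  have h := sum_cntF_shift hnz f t
  have h2 : (∑ j ∈ Finset.range (t + (n+z)), (cntF n z f j : ℤ))
      = (∑ j ∈ Finset.range t, (cntF n z f j : ℤ)) + n := by
    exact_mod_cast congrArg (fun x : ℕ => (x : ℤ)) h
  rw [h2]
  push_cast
  ring

lemma shift_count {n z : ℕ} (hnz : 0 < n + z) (f : Fin n → ZMod (n+z)) (a : ZMod (n+z))
    {s : ℕ} (hs : s ≤ n + z) :
    ((Finset.univ.filter fun i => (f i + a).val < s).card : ℤ)
      = GF n z f (((n+z) - a.val) + s) - GF n z f ((n+z) - a.val) + s := by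
  haveI : NeZero (n+z) := ⟨by omega⟩
  have hval : a.val < n + z := ZMod.val_lt a
  have hab : (((n+z) - a.val : ℕ) : ZMod (n+z)) = -a := by
    rw [Nat.cast_sub (le_of_lt hval), ZMod.natCast_self, ZMod.natCast_val, ZMod.cast_id]
    ring
  have hfib := Finset.card_eq_sum_card_fiberwise
    (f := fun i : Fin n => (f i + a).val)
    (s := Finset.univ.filter fun i => (f i + a).val < s) (t := Finset.range s)
    (fun i hi => Finset.mem_range.2 (Finset.mem_filter.1 hi).2)
  have hsummand : ∀ v ∈ Finset.range s,
      ((Finset.univ.filter fun i => (f i + a).val < s).filter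
        (fun i => (f i + a).val = v)).card = cntF n z f (((n+z) - a.val) + v) := by
    intro v hv
    rw [Finset.mem_range] at hv
    rw [Finset.filter_filter]
    unfold cntF
    congr 1
    apply Finset.filter_congr
    intro i _
    constructor
    · rintro ⟨-, h2⟩
      have h3 : f i + a = (v : ZMod (n+z)) := (val_eq_iff _ _ (by omega)).1 h2
      have : f i = (v : ZMod (n+z)) - a := by
        rw [← h3]; ring
      rw [this, show ((((n+z) - a.val) + v : ℕ) : ZMod (n+z))
          = ((v : ZMod (n+z)) - a) from by
        rw [Nat.cast_add, hab]; ring]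
    · intro h
      have h3 : f i + a = (v : ZMod (n+z)) := by
        rw [h, Nat.cast_add, hab]; ring
      have h4 : (f i + a).val = v := by rw [h3, ZMod.val_cast_of_lt (by omega)]
      exact ⟨by omega, h4⟩
  rw [Finset.sum_congr rfl hsummand] at hfib
  have hsum := sum_cntF_add f ((n+z) - a.val) s
  have hcast : ((∑ v ∈ Finset.range s, cntF n z f (((n+z) - a.val) + v) : ℕ) : ℤ)
      = (∑ j ∈ Finset.range (((n+z) - a.val) + s), (cntF n z f j : ℤ))
        - (∑ j ∈ Finset.range ((n+z) - a.val), (cntF n z f j : ℤ)) := by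
    push_cast
    have := congrArg (fun x : ℕ => (x : ℤ)) hsum
    push_cast at this
    omega
  rw [hfib]
  push_cast
  push_cast at hcast
  rw [hcast]
  unfold GF
  push_cast
  ring

lemma good_iff_rec {n z : ℕ} (hn : 0 < n) (hz : 0 < z) (f : Fin n → ZMod (n+z))
    (a : ZMod (n+z)) :
    GoodF n z (fun i => f i + a)
      ↔ RecP (GF n z f) ((((n+z)) - a.val) + (n+z)) := by
  haveI : NeZero (n+z) := ⟨by omega⟩
  have hval : a.val < n + z := ZMod.val_lt a
  have hper := GF_per (by omega : 0 < n + z) f ((n+z) - a.val)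
  constructor
  · intro hg
    have hwin : ∀ s, s < n+z → GF n z f (((n+z) - a.val) + (n+z))
        < GF n z f (((n+z) - a.val) + s) := by
      intro s hs
      have h1 := hg s hs
      rw [shift_count (by omega) f a (by omega)] at h1
      have hz' : (1:ℤ) ≤ z := by exact_mod_cast hz
      omega
    intro t ht
    rcases le_or_gt ((n+z) - a.val) t with h1 | h1
    · have := hwin (t - ((n+z) - a.val)) (by omega)
      rwa [show ((n+z) - a.val) + (t - ((n+z) - a.val)) = t by omega] at this
    · have h2 := hwin (t + (n+z) - ((n+z) - a.val)) (by omega)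
      rw [show ((n+z) - a.val) + (t + (n+z) - ((n+z) - a.val)) = t + (n+z) by omega] at h2
      have h3 := GF_per (by omega : 0 < n + z) f t
      have hz' : (0:ℤ) ≤ z := by positivity
      omega
  · intro hrec s hs
    rw [shift_count (by omega) f a (by omega)]
    have h1 := hrec (((n+z) - a.val) + s) (by omega)
    have hz' : (1:ℤ) ≤ z := by exact_mod_cast hz
    omega

lemma count_shifts {n z : ℕ} [NeZero (n+z)] (hn : 0 < n) (hz : 0 < z)
    (f : Fin n → ZMod (n+z)) :
    (Finset.univ.filter fun a : ZMod (n+z) => GoodF n z (fun i => f i + a)).card = z := by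
  have hrec := rec_count (G := GF n z f) (m := n+z) (by omega) hz (by simp [GF])
    (GF_step f) (GF_per (by omega) f)
  refine Eq.trans ?_ hrec
  apply Finset.card_bij' (i := fun a _ => ((n+z) - a.val) + (n+z))
    (j := fun b _ => ((2*(n+z) - b : ℕ) : ZMod (n+z)))
  · intro a ha
    rw [Finset.mem_filter] at ha
    have hval : a.val < n + z := ZMod.val_lt a
    rw [Finset.mem_filter, Finset.mem_Ico]
    exact ⟨⟨by omega, by omega⟩, (good_iff_rec hn hz f a).1 ha.2⟩
  · intro b hb
    rw [Finset.mem_filter, Finset.mem_Ico] at hb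
    rw [Finset.mem_filter]
    refine ⟨Finset.mem_univ _, ?_⟩
    rw [good_iff_rec hn hz f _]
    rw [show ((n+z) - (((2*(n+z) - b : ℕ) : ZMod (n+z))).val) + (n+z) = b from by
      rw [ZMod.val_cast_of_lt (by omega)]; omega]
    exact hb.2
  · intro a ha
    have hval : a.val < n + z := ZMod.val_lt a
    rw [show 2*(n+z) - (((n+z) - a.val) + (n+z)) = a.val from by omega]
    rw [ZMod.natCast_val, ZMod.cast_id]
  · intro b hb
    rw [Finset.mem_filter, Finset.mem_Ico] at hb
    rw [ZMod.val_cast_of_lt (by omega)]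
    omega

lemma card_goodF {n z : ℕ} [NeZero (n+z)] (hn : 0 < n) (hz : 0 < z) :
    (Finset.univ.filter (GoodF n z)).card = z * (n+z)^(n-1) := by
  have key : ∀ a : ZMod (n+z),
      (Finset.univ.filter fun f : Fin n → ZMod (n+z) => GoodF n z (fun i => f i + a)).card
        = (Finset.univ.filter (GoodF n z)).card := by
    intro a
    apply Finset.card_bij' (i := fun f _ => fun i => f i + a)
      (j := fun g _ => fun i => g i - a)
    · intro f hf
      rw [Finset.mem_filter] at hf ⊢
      exact ⟨Finset.mem_univ _, hf.2⟩
    · intro g hg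
      rw [Finset.mem_filter] at hg ⊢
      refine ⟨Finset.mem_univ _, ?_⟩
      have he : (fun i => g i - a + a) = g := funext fun i => by ring
      rw [he]
      exact hg.2
    · intro f _
      funext i
      simp only
      ring
    · intro g _
      funext i
      simp only
      ring
  have hswap : ∑ a : ZMod (n+z),
      (Finset.univ.filter fun f : Fin n → ZMod (n+z) => GoodF n z (fun i => f i + a)).card
      = ∑ f : Fin n → ZMod (n+z),
      (Finset.univ.filter fun a : ZMod (n+z) => GoodF n z (fun i => f i + a)).card := by
    simp only [Finset.card_filter]
    rw [Finset.sum_comm]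
  have h1 : ∑ a : ZMod (n+z),
      (Finset.univ.filter fun f : Fin n → ZMod (n+z) => GoodF n z (fun i => f i + a)).card
      = (n+z) * (Finset.univ.filter (GoodF n z)).card := by
    rw [Finset.sum_congr rfl (fun a _ => key a), Finset.sum_const, Finset.card_univ,
      ZMod.card, smul_eq_mul]
  have h2 : ∑ f : Fin n → ZMod (n+z),
      (Finset.univ.filter fun a : ZMod (n+z) => GoodF n z (fun i => f i + a)).card
      = (n+z)^n * z := by
    rw [Finset.sum_congr rfl (fun f _ => count_shifts hn hz f), Finset.sum_const,
      Finset.card_univ, smul_eq_mul]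
    congr 1
    rw [Fintype.card_fun, ZMod.card, Fintype.card_fin]
  rw [hswap, h2] at h1
  have h3 : (n+z)^n = (n+z) * (n+z)^(n-1) := by
    obtain ⟨p, hp⟩ : ∃ p, n = p + 1 := ⟨n - 1, (Nat.succ_pred_eq_of_pos hn).symm⟩
    rw [hp, Nat.add_sub_cancel, pow_succ]
    ring
  apply Nat.eq_of_mul_eq_mul_left (Nat.add_pos_left hn z)
  rw [← h1, h3]
  ring

def decC (k z e : ℕ) : ℕ := if e ≤ z then e else z + (e - z) * k

def encV (k z c : ℕ) : ℕ := if c ≤ z then c else z + req k z c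

def encList (n k z : ℕ) (f : Fin n → ZMod (n+z)) : List ℕ :=
  List.ofFn (fun i => decC k z ((f i).val + 1))

lemma req_decC {k z : ℕ} (hk : 0 < k) (e : ℕ) : req k z (decC k z e) = e - z := by
  unfold decC req
  by_cases h : e ≤ z
  · rw [if_pos h]
    have : e - z = 0 := by omega
    rw [this]
    simp [Nat.sub_eq_zero_of_le h]
  · rw [if_neg h]
    rw [show z + (e - z) * k - z = (e - z) * k by omega]
    exact Nat.mul_div_cancel _ hk

lemma decC_inj {k z e e' : ℕ} (hk : 0 < k) (h : decC k z e = decC k z e') : e = e' := by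
  unfold decC at h
  by_cases h1 : e ≤ z <;> by_cases h2 : e' ≤ z
  · rwa [if_pos h1, if_pos h2] at h
  · rw [if_pos h1, if_neg h2] at h
    have : 1 * 1 ≤ (e' - z) * k := Nat.mul_le_mul (by omega) hk
    omega
  · rw [if_neg h1, if_pos h2] at h
    have : 1 * 1 ≤ (e - z) * k := Nat.mul_le_mul (by omega) hk
    omega
  · rw [if_neg h1, if_neg h2] at h
    have : (e - z) * k = (e' - z) * k := by omega
    have := Nat.eq_of_mul_eq_mul_right hk this
    omega

lemma encV_facts {n k z c : ℕ} (hn : 0 < n) (hk : 0 < k) (hc : InA n k z c) :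
    1 ≤ encV k z c ∧ encV k z c ≤ n + z - 1 ∧ decC k z (encV k z c) = c := by
  obtain ⟨hc1, hc2, hc3, hc4⟩ := InA_le hn hk hc
  unfold encV decC
  by_cases h : c ≤ z
  · rw [if_pos h, if_pos h]
    omega
  · rw [if_neg h]
    have hreq1 : 1 ≤ req k z c := by
      rcases hc4 with h' | h'
      · omega
      · by_contra hcon
        push_neg at hcon
        interval_cases hr : req k z c
        omega
    rw [if_neg (by omega)]
    refine ⟨by omega, by omega, ?_⟩
    rw [show z + req k z c - z = req k z c by omega]
    omega

lemma length_filter_ofFn {n : ℕ} (g : Fin n → ℕ) (p : ℕ → Prop) [DecidablePred p] :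
    ((List.ofFn g).filter (fun x => decide (p x))).length
      = (Finset.univ.filter fun i => p (g i)).card := by
  classical
  induction n with
  | zero => simp
  | succ n ih =>
    rw [List.ofFn_succ, List.filter_cons]
    rw [Fin.card_filter_univ_succ (p := fun i => p (g i))]
    by_cases h : p (g 0)
    · rw [if_pos (by simpa using h), if_pos h]
      simp only [List.length_cons]
      rw [ih (fun i => g i.succ)]
    · rw [if_neg (by simpa using h), if_neg h]
      rw [ih (fun i => g i.succ)]

lemma goodF_iff_ge {n z : ℕ} [NeZero (n+z)] (hn : 0 < n) (hz : 0 < z)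
    (f : Fin n → ZMod (n+z)) :
    GoodF n z f ↔ ∀ t, 1 ≤ t →
      (Finset.univ.filter fun i => z + t ≤ (f i).val + 1).card ≤ n - t := by
  have hcompl : ∀ t, 1 ≤ t → t ≤ n →
      (Finset.univ.filter fun i => (f i).val < z + t - 1).card
        + (Finset.univ.filter fun i => z + t ≤ (f i).val + 1).card = n := by
    intro t ht1 ht2
    have h := Finset.card_filter_add_card_filter_not
      (s := (Finset.univ : Finset (Fin n))) (p := fun i => (f i).val < z + t - 1)
    rw [Finset.card_univ, Fintype.card_fin] at h
    have hcongr : (Finset.univ.filter fun a => ¬ (f a).val < z + t - 1)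
        = (Finset.univ.filter fun i => z + t ≤ (f i).val + 1) := by
      apply Finset.filter_congr
      intro i _
      constructor
      · intro h'; omega
      · intro h'; omega
    rw [hcongr] at h
    exact h
  constructor
  · intro hg t ht1
    rcases le_or_gt t n with ht2 | ht2
    · have h1 := hg (z + t - 1) (by omega)
      have h2 := hcompl t ht1 ht2
      omega
    · have h1 := hg (z + n - 1) (by omega)
      have h2 := hcompl n (by omega) le_rfl
      have h3 : (Finset.univ.filter fun i => z + t ≤ (f i).val + 1).card
          ≤ (Finset.univ.filter fun i => z + n ≤ (f i).val + 1).card := by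
        apply Finset.card_le_card
        intro x hx
        rw [Finset.mem_filter] at hx ⊢
        have := hx.2
        exact ⟨hx.1, by omega⟩
      omega
  · intro h s hs
    rcases lt_or_ge s z with h1 | h1
    · have : (0:ℤ) ≤ ((Finset.univ.filter fun i => (f i).val < s).card : ℤ) := by positivity
      omega
    · have h2 := h (s - z + 1) (by omega)
      have h3 := hcompl (s - z + 1) (by omega) (by omega)
      rw [show z + (s - z + 1) - 1 = s by omega] at h3
      rw [show z + (s - z + 1) = s + 1 by omega] at h2 h3
      omega

lemma val_bound_of_good {n z : ℕ} [NeZero (n+z)] (hn : 0 < n) (hz : 0 < z)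
    {f : Fin n → ZMod (n+z)} (hg : GoodF n z f) (i : Fin n) :
    (f i).val + 1 ≤ n + z - 1 := by
  have h := (goodF_iff_ge hn hz f).1 hg n (by omega)
  rw [Nat.sub_self] at h
  have h2 : (Finset.univ.filter fun i => z + n ≤ (f i).val + 1) = ∅ :=
    Finset.card_eq_zero.1 (by omega)
  by_contra hcon
  have : i ∈ (Finset.univ.filter fun i => z + n ≤ (f i).val + 1) :=
    Finset.mem_filter.2 ⟨Finset.mem_univ _, by omega⟩
  rw [h2] at this
  exact absurd this (Finset.notMem_empty i)

lemma cond_encList_iff {n k z : ℕ} [NeZero (n+z)] (hn : 0 < n) (hk : 0 < k) (hz : 0 < z)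
    (f : Fin n → ZMod (n+z)) :
    Cond n ((encList n k z f).map (req k z)) ↔ GoodF n z f := by
  have hmap : (encList n k z f).map (req k z)
      = List.ofFn (fun i => (f i).val + 1 - z) := by
    unfold encList
    rw [List.map_ofFn]
    congr 1
    funext i
    exact req_decC hk _
  rw [hmap, goodF_iff_ge hn hz f]
  have hcnt : ∀ t, 1 ≤ t → ((List.ofFn (fun i => (f i).val + 1 - z)).filter
      (fun r => decide (t ≤ r))).length
      = (Finset.univ.filter fun i => z + t ≤ (f i).val + 1).card := by
    intro t ht
    rw [length_filter_ofFn (fun i => (f i).val + 1 - z) (fun x => t ≤ x)]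
    congr 1
    apply Finset.filter_congr
    intro i _
    constructor
    · intro h'; omega
    · intro h'; omega
  constructor
  · intro hc t ht
    rw [← hcnt t ht]
    exact hc t
  · intro hg t
    rcases Nat.eq_zero_or_pos t with rfl | ht
    · have hlen := List.length_filter_le (fun r => decide ((0:ℕ) ≤ r))
        (List.ofFn (fun i => (f i).val + 1 - z))
      rw [List.length_ofFn] at hlen
      simpa using hlen
    · rw [hcnt t ht]
      exact hg t ht

lemma encList_injective {n k z : ℕ} [NeZero (n+z)] (hk : 0 < k) :
    Function.Injective (encList n k z) := by
  intro f g h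
  funext i
  unfold encList at h
  have h1 : (fun i => decC k z ((f i).val + 1)) = (fun i => decC k z ((g i).val + 1)) := by
    apply List.ofFn_injective h
  have h2 : decC k z ((f i).val + 1) = decC k z ((g i).val + 1) := congrFun h1 i
  have h3 : (f i).val = (g i).val := by
    have := decC_inj hk h2
    omega
  have h4 : (((f i).val : ℕ) : ZMod (n+z)) = (((g i).val : ℕ) : ZMod (n+z)) := by rw [h3]
  rwa [ZMod.natCast_val, ZMod.cast_id, ZMod.natCast_val, ZMod.cast_id] at h4

theorem stmt9' (n k z : ℕ) (hn : 0 < n) (hk : 2 ≤ k) (hz : 0 < z) :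
    {cs : List ℕ | PermInvariant (List.replicate n k) cs z}.ncard
      = z * (n + z) ^ (n - 1) := by
  haveI : NeZero (n+z) := ⟨by omega⟩
  have hk0 : 0 < k := by omega
  have hset : {cs : List ℕ | PermInvariant (List.replicate n k) cs z}
      = ↑((Finset.univ.filter (GoodF n z)).image (encList n k z)) := by
    ext cs
    rw [Set.mem_setOf_eq, char hn hk hz cs, Finset.coe_image, Set.mem_image]
    constructor
    · rintro ⟨hlen, hA, hcond⟩
      set f : Fin n → ZMod (n+z) :=
        fun i => (((encV k z (cs.get (Fin.cast hlen.symm i))) - 1 : ℕ) : ZMod (n+z)) with hf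
      have hfacts : ∀ i : Fin n, 1 ≤ encV k z (cs.get (Fin.cast hlen.symm i))
          ∧ encV k z (cs.get (Fin.cast hlen.symm i)) ≤ n + z - 1
          ∧ decC k z (encV k z (cs.get (Fin.cast hlen.symm i)))
            = cs.get (Fin.cast hlen.symm i) :=
        fun i => encV_facts hn hk0 (hA _ (by apply List.get_mem))
      have hval : ∀ i : Fin n, (f i).val
          = encV k z (cs.get (Fin.cast hlen.symm i)) - 1 := by
        intro i
        rw [hf]
        exact ZMod.val_cast_of_lt (by have := (hfacts i).2.1; omega)
      have hlist : encList n k z f = cs := by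
        apply List.ext_getElem
        · simp [encList, hlen]
        · intro i h1 h2
          simp only [encList, List.getElem_ofFn]
          rw [hval, Nat.sub_add_cancel (hfacts _).1, (hfacts _).2.2]
          simp [List.get_eq_getElem]
      refine ⟨f, ?_, hlist⟩
      rw [Finset.mem_coe, Finset.mem_filter]
      refine ⟨Finset.mem_univ _, ?_⟩
      rw [← cond_encList_iff hn hk0 hz f, hlist]
      exact hcond
    · rintro ⟨f, hf, rfl⟩
      rw [Finset.mem_coe, Finset.mem_filter] at hf
      have hg := hf.2
      refine ⟨List.length_ofFn, ?_, (cond_encList_iff hn hk0 hz f).2 hg⟩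
      intro c hc
      rw [encList, List.mem_ofFn] at hc
      obtain ⟨i, hi⟩ := hc
      have hi' : decC k z ((f i).val + 1) = c := hi
      have hb := val_bound_of_good hn hz hg i
      rw [← hi']
      by_cases h1 : (f i).val + 1 ≤ z
      · left
        unfold decC
        rw [if_pos h1]
        omega
      · right
        refine ⟨(f i).val + 1 - z, by omega, by omega, ?_⟩
        unfold decC
        rw [if_neg h1]
  rw [hset, Set.ncard_coe_finset,
    Finset.card_image_of_injective _ (encList_injective hk0), card_goodF hn hz]

theorem stmt9 (n k z : ℕ) (hn : 0 < n) (hk : 2 ≤ k) (hz : 0 < z) :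
    {cs : List ℕ | PermInvariant (List.replicate n k) cs z}.ncard
      = z * (n + z) ^ (n - 1) := by
  exact stmt9' n k z hn hk hz
end

section
/- Let k ≥ 2, z, n ∈ Z_+ and u = (z, z+1, ..., z+n-1). The map sending c to c' where c'_j = c_j if c_j ≤ z and c'_j = z+s if c_j = z+sk, is a bijection from the set of permutation-invariant parking sequences for ((k^n); z) to the set of u-parking functions of length n. -/
open Finset

namespace S10

lemma orderStats_perm (l : List ℕ) : (orderStats l).Perm l := by
  rw [← Multiset.coe_eq_coe]
  exact Multiset.sort_eq _ _

lemma orderStats_sorted (l : List ℕ) : (orderStats l).Pairwise (· ≤ ·) :=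
  Multiset.pairwise_sort _ _

lemma orderStats_length (l : List ℕ) : (orderStats l).length = l.length :=
  (orderStats_perm l).length_eq

lemma sorted_getD_mono {l : List ℕ} (h : l.Pairwise (· ≤ ·)) {i j : ℕ} (hij : i ≤ j)
    (hj : j < l.length) : l.getD i 0 ≤ l.getD j 0 := by
  rcases eq_or_lt_of_le hij with rfl | hlt
  · exact le_refl _
  · rw [List.getD_eq_getElem _ _ (lt_of_le_of_lt hij hj), List.getD_eq_getElem _ _ hj]
    exact List.pairwise_iff_getElem.1 h i j _ _ hlt

lemma mem_le_getD_last {l : List ℕ} (h : l.Pairwise (· ≤ ·)) {x : ℕ} (hx : x ∈ l) :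
    x ≤ l.getD (l.length - 1) 0 := by
  obtain ⟨i, hi, rfl⟩ := List.mem_iff_getElem.1 hx
  rw [← List.getD_eq_getElem l 0 hi]
  exact sorted_getD_mono h (Nat.le_sub_one_of_lt hi) (by omega)

lemma countP_le_of_getD {l : List ℕ} (h : l.Pairwise (· ≤ ·)) {i b : ℕ} (hi : i < l.length)
    (hb : l.getD i 0 ≤ b) : l.countP (fun c => b < c) ≤ l.length - 1 - i := by
  have hsplit := List.take_append_drop (i + 1) l
  have hc : l.countP (fun c => b < c) =
      (l.take (i+1)).countP (fun c => b < c) + (l.drop (i+1)).countP (fun c => b < c) := by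
    conv_lhs => rw [← hsplit]
    exact List.countP_append
  have h0 : (l.take (i+1)).countP (fun c => b < c) = 0 := by
    rw [List.countP_eq_zero]
    intro a ha
    obtain ⟨j, hj, rfl⟩ := List.mem_take_iff_getElem.1 ha
    have hj' : j < l.length := lt_of_lt_of_le hj (by simp)
    simp only [decide_eq_true_eq]
    have hji : j ≤ i := by
      have := lt_of_lt_of_le hj (min_le_left _ _); omega
    have : l[j] ≤ l.getD i 0 := by
      rw [← List.getD_eq_getElem l 0 hj']
      exact sorted_getD_mono h hji hi
    omega
  have h1 : (l.drop (i+1)).countP (fun c => b < c) ≤ l.length - 1 - i := by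
    calc (l.drop (i+1)).countP (fun c => b < c) ≤ (l.drop (i+1)).length :=
        List.countP_le_length
    _ = l.length - 1 - i := by rw [List.length_drop]; omega
  omega

lemma le_countP_of_getD {l : List ℕ} (h : l.Pairwise (· ≤ ·)) {i b : ℕ} (hi : i < l.length)
    (hb : b < l.getD i 0) : l.length - i ≤ l.countP (fun c => b < c) := by
  have hsplit := List.take_append_drop i l
  have hc : l.countP (fun c => b < c) =
      (l.take i).countP (fun c => b < c) + (l.drop i).countP (fun c => b < c) := by
    conv_lhs => rw [← hsplit]
    exact List.countP_append
  have h1 : (l.drop i).countP (fun c => b < c) = (l.drop i).length := by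
    rw [List.countP_eq_length]
    intro a ha
    obtain ⟨j, hj, rfl⟩ := List.mem_drop_iff_getElem.1 ha
    simp only [decide_eq_true_eq]
    have : l.getD i 0 ≤ l.getD (i+j) 0 := sorted_getD_mono h (by omega) (by omega)
    have e1 : l.getD i 0 = l[i] := List.getD_eq_getElem l 0 hi
    have e2 : l.getD (i+j) 0 = l[i+j]'(by omega) := List.getD_eq_getElem l 0 (by omega)
    omega
  rw [List.length_drop] at h1
  omega

lemma orderStats_map_mono {f : ℕ → ℕ} (hf : Monotone f) (l : List ℕ) :
    orderStats (l.map f) = (orderStats l).map f := by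
  apply List.Perm.eq_of_pairwise' (r := (· ≤ ·)) (orderStats_sorted _) ?_
    (((orderStats_perm _)).trans ((orderStats_perm l).map f).symm)
  exact List.Pairwise.map f (fun a b hab => hf hab) (orderStats_sorted l)

lemma firstEmpty_eq_some {occ : Finset ℕ} {M c j : ℕ} (h1 : c ≤ j) (h2 : j ≤ M)
    (h3 : j ∉ occ) (h4 : ∀ i, c ≤ i → i < j → i ∈ occ) : firstEmpty occ M c = some j := by
  unfold firstEmpty
  rw [List.find?_eq_some_iff_append]
  refine ⟨by simpa using h3, List.range' c (j - c), List.range' (j+1) (M - j), ?_, ?_⟩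
  · have : List.range' c (j - c) ++ j :: List.range' (j+1) (M-j)
        = List.range' c (j - c) ++ List.range' j (M + 1 - j) := by
      congr 1
      rw [show M + 1 - j = (M - j) + 1 by omega]
      rw [List.range'_succ]
    rw [this]
    rw [show List.range' j (M+1-j) = List.range' (c + (j - c)) (M+1-j) by rw [Nat.add_sub_cancel' h1]]
    rw [List.range'_append_1]
    congr 1
    omega
  · intro a ha
    rw [List.mem_range'_1] at ha
    simp only [Bool.not_eq_true', decide_eq_false_iff_not, not_not]
    exact h4 a ha.1 (by omega)

lemma firstEmpty_spec {occ : Finset ℕ} {M c j : ℕ} (h : firstEmpty occ M c = some j) :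
    c ≤ j ∧ j ≤ M ∧ j ∉ occ := by
  unfold firstEmpty at h
  have hm := List.mem_of_find?_eq_some h
  have hp := List.find?_some h
  rw [List.mem_range'_1] at hm
  simp only [decide_eq_true_eq] at hp
  exact ⟨hm.1, by omega, hp⟩

lemma parkAux_prefix (M : ℕ) : ∀ (cs1 : List ℕ) (occ : Finset ℕ) (ys1 cs2 ys2 : List ℕ),
    cs1.length = ys1.length →
    (parkAux M occ (cs1 ++ cs2) (ys1 ++ ys2)).isSome = true →
    (parkAux M occ cs1 ys1).isSome = true := by
  intro cs1
  induction cs1 with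
  | nil =>
    intro occ ys1 cs2 ys2 h1 h2
    obtain rfl : ys1 = [] := List.length_eq_zero_iff.1 h1.symm
    simp [parkAux]
  | cons c cs ih =>
    intro occ ys1 cs2 ys2 h1 h2
    cases ys1 with
    | nil => simp at h1
    | cons y ys =>
      simp only [List.cons_append, parkAux] at h2 ⊢
      rcases Option.eq_none_or_eq_some (firstEmpty occ M c) with hfe | ⟨j, hfe⟩
      · rw [hfe] at h2; simp at h2
      · rw [hfe] at h2 ⊢
        dsimp only at h2 ⊢
        split_ifs at h2 ⊢ with hcond
        · have g1 : (parkAux M (occ ∪ Ico j (j + y)) (cs ++ cs2) (ys ++ ys2)).isSome = true := by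
            simpa using h2
          have := ih (occ ∪ Ico j (j + y)) ys cs2 ys2 (by simpa using h1) g1
          simpa using this
        · exact h2


lemma failA_aux (M z k cm : ℕ) (hk : 0 < k) :
    ∀ (cs : List ℕ) (occ : Finset ℕ) (l : List ℕ),
    parkAux M occ cs (List.replicate cs.length k) = some l →
    Ico 1 z ⊆ occ → cm ∈ occ → occ ⊆ Ico 1 (M+1) → (∀ c ∈ cs, 1 ≤ c) →
    ∃ occF : Finset ℕ, occ ⊆ occF ∧ occF ⊆ Ico 1 (M+1) ∧
      occF.card = occ.card + cs.length * k ∧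
      (occF ∩ Ico z cm).card % k = (occ ∩ Ico z cm).card % k := by
  intro cs
  induction cs with
  | nil =>
    intro occ l _ _ _ hsub _
    exact ⟨occ, subset_rfl, hsub, by simp, rfl⟩
  | cons c cs ih =>
    intro occ l hpark htr hcm hsub hpos
    rw [List.length_cons, List.replicate_succ] at hpark
    simp only [parkAux] at hpark
    rcases Option.eq_none_or_eq_some (firstEmpty occ M c) with hfe | ⟨j, hfe⟩
    · rw [hfe] at hpark; simp at hpark
    · rw [hfe] at hpark
      dsimp only at hpark
      split_ifs at hpark with hcond
      · obtain ⟨hdisj, hjM⟩ := hcond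
        obtain ⟨hcj, hjM', hjocc⟩ := firstEmpty_spec hfe
        have hj1 : 1 ≤ j := le_trans (hpos c (by simp)) hcj
        have hjz : z ≤ j := by
          by_contra hlt
          exact hjocc (htr (mem_Ico.2 ⟨hj1, by omega⟩))
        rw [Option.map_eq_some_iff] at hpark
        obtain ⟨l', hpark', rfl⟩ := hpark
        have hdisj' : Disjoint occ (Ico j (j+k)) := by
          rw [Finset.disjoint_right]
          intro a ha ha'
          exact hdisj a ha ha'
        obtain ⟨occF, hsub1, hsub2, hcard, hmod⟩ :=
          ih (occ ∪ Ico j (j+k)) l' hpark'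
            (htr.trans subset_union_left)
            (mem_union_left _ hcm)
            (union_subset hsub (fun a ha => by
              rw [mem_Ico] at ha ⊢
              omega))
            (fun c' hc' => hpos c' (by simp [hc']))
        refine ⟨occF, subset_union_left.trans hsub1, hsub2, ?_, ?_⟩
        · rw [hcard, card_union_of_disjoint hdisj', Nat.card_Ico]
          simp only [List.length_cons]
          ring_nf
          omega
        · rw [hmod]
          have hcmj : cm < j ∨ j + k ≤ cm := by
            by_contra hc'
            push_neg at hc'
            exact (Finset.disjoint_left.1 hdisj' hcm (mem_Ico.2 ⟨by omega, by omega⟩)).elim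
          rw [union_inter_distrib_right]
          rcases hcmj with hlt | hge
          · have : Ico j (j+k) ∩ Ico z cm = ∅ := by
              ext a; simp only [mem_inter, mem_Ico, notMem_empty, iff_false]; omega
            rw [this, union_empty]
          · have : Ico j (j+k) ∩ Ico z cm = Ico j (j+k) := by
              ext a; simp only [mem_inter, mem_Ico, iff_self_and]; omega
            rw [this, card_union_of_disjoint (hdisj'.mono_left (inter_subset_left))]
            rw [Nat.card_Ico, show j + k - j = k by omega, Nat.add_mod_right]

lemma failB_aux (M b : ℕ) : ∀ (cs ys : List ℕ) (occ : Finset ℕ) (l : List ℕ),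
    parkAux M occ cs ys = some l → (∀ c ∈ cs, b ≤ c) → (∀ y ∈ ys, 1 ≤ y) →
    ∃ occF : Finset ℕ, occF ⊆ occ ∪ Icc b M ∧ occF.card = occ.card + ys.sum := by
  intro cs
  induction cs with
  | nil =>
    intro ys occ l hpark _ _
    cases ys with
    | nil => exact ⟨occ, subset_union_left, by simp⟩
    | cons y ys => simp [parkAux] at hpark
  | cons c cs ih =>
    intro ys occ l hpark hb hy
    cases ys with
    | nil => simp [parkAux] at hpark
    | cons y ys =>
      simp only [parkAux] at hpark
      rcases Option.eq_none_or_eq_some (firstEmpty occ M c) with hfe | ⟨j, hfe⟩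
      · rw [hfe] at hpark; simp at hpark
      · rw [hfe] at hpark
        dsimp only at hpark
        split_ifs at hpark with hcond
        · obtain ⟨hdisj, hjM⟩ := hcond
          obtain ⟨hcj, hjM', hjocc⟩ := firstEmpty_spec hfe
          rw [Option.map_eq_some_iff] at hpark
          obtain ⟨l', hpark', rfl⟩ := hpark
          have hdisj' : Disjoint occ (Ico j (j+y)) := by
            rw [Finset.disjoint_right]
            exact fun a ha ha' => hdisj a ha ha'
          obtain ⟨occF, hsub1, hcard⟩ := ih ys (occ ∪ Ico j (j+y)) l' hpark'
            (fun c' hc' => hb c' (by simp [hc'])) (fun y' hy' => hy y' (by simp [hy']))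
          have hy1 : 1 ≤ y := hy y (by simp)
          refine ⟨occF, hsub1.trans ?_, ?_⟩
          · apply union_subset
            · apply union_subset subset_union_left
              intro a ha
              rw [mem_Ico] at ha
              apply mem_union_right
              rw [mem_Icc]
              constructor
              · exact le_trans (hb c (by simp)) (le_trans hcj ha.1)
              · omega
            · exact subset_union_right
          · rw [hcard, card_union_of_disjoint hdisj', Nat.card_Ico, List.sum_cons]
            omega

def blockOcc (z k : ℕ) (T : Finset ℕ) : Finset ℕ :=
  Ico 1 z ∪ T.biUnion (fun s => Ico (z + s * k) (z + s * k + k))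

lemma mem_blockOcc {z k : ℕ} (hk : 0 < k) {T : Finset ℕ} {j : ℕ} :
    j ∈ blockOcc z k T ↔ (1 ≤ j ∧ j < z) ∨ (z ≤ j ∧ (j - z) / k ∈ T) := by
  unfold blockOcc
  rw [mem_union, mem_Ico, mem_biUnion]
  constructor
  · rintro (h | ⟨s, hs, hj⟩)
    · exact Or.inl h
    · rw [mem_Ico] at hj
      refine Or.inr ⟨le_trans (Nat.le_add_right z (s*k)) hj.1, ?_⟩
      have : (j - z) / k = s := by
        apply Nat.div_eq_of_lt_le
        · omega
        · rw [Nat.add_mul, Nat.one_mul]; omega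
      rw [this]; exact hs
  · rintro (h | ⟨hzj, hq⟩)
    · exact Or.inl h
    · refine Or.inr ⟨(j - z)/k, hq, ?_⟩
      rw [mem_Ico]
      have h1 : (j - z) / k * k ≤ j - z := Nat.div_mul_le_self _ _
      have h2 : j - z < ((j - z)/k + 1) * k := by
        rw [Nat.add_mul, Nat.one_mul]
        have := Nat.mod_lt (j - z) hk
        have := Nat.div_add_mod (j - z) k
        rw [Nat.mul_comm] at this
        omega
      rw [Nat.add_mul, Nat.one_mul] at h2
      omega

lemma parks (z k n : ℕ) (hz : 0 < z) (hk : 0 < k) :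
    ∀ (cs : List ℕ) (T : Finset ℕ), T ⊆ range n →
    (∀ c ∈ cs, 1 ≤ c ∧ (c ≤ z ∨ ∃ s, 1 ≤ s ∧ c = z + s * k)) →
    (∀ s : ℕ, cs.countP (fun c => decide (z + s * k < c)) ≤
      ((range n).filter (fun t => t ∉ T ∧ s < t)).card) →
    cs.length ≤ ((range n).filter (fun t => t ∉ T)).card →
    (parkAux (z - 1 + n * k) (blockOcc z k T) cs (List.replicate cs.length k)).isSome = true := by
  intro cs
  induction cs with
  | nil => intro T _ _ _ _; simp [parkAux]
  | cons c cs ih =>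
    intro T hT hallow hHall hlen
    set M := z - 1 + n * k with hM
    -- existence of a free block of index ≥ s₀
    obtain ⟨hc1, hform⟩ := hallow c (by simp)
    -- s₀
    have hex : ∃ s₀ : ℕ, c ≤ z + s₀ * k ∧ (s₀ = 0 ∧ c ≤ z ∨ 1 ≤ s₀ ∧ c = z + s₀ * k) := by
      rcases hform with h | ⟨s, hs1, rfl⟩
      · exact ⟨0, by omega, Or.inl ⟨rfl, h⟩⟩
      · exact ⟨s, le_refl _, Or.inr ⟨hs1, rfl⟩⟩
    obtain ⟨s₀, hcs₀, hs₀⟩ := hex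
    have hFne : ((range n).filter (fun t => t ∉ T ∧ s₀ ≤ t)).Nonempty := by
      rcases hs₀ with ⟨rfl, hcz⟩ | ⟨hs1, hcform⟩
      · have h1 : 0 < ((range n).filter (fun t => t ∉ T)).card :=
          Nat.lt_of_lt_of_le (by simp) hlen
        obtain ⟨t, ht⟩ := card_pos.1 h1
        rw [mem_filter] at ht
        exact ⟨t, mem_filter.2 ⟨ht.1, ht.2, Nat.zero_le t⟩⟩
      · have h1 : 1 ≤ (c :: cs).countP (fun c' => decide (z + (s₀ - 1) * k < c')) := by
          rw [List.countP_cons]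
          have : z + (s₀ - 1) * k < c := by
            rw [hcform]
            have : (s₀ - 1) * k < s₀ * k :=
              (Nat.mul_lt_mul_right hk).2 (by omega)
            omega
          simp [this]
        have h2 := hHall (s₀ - 1)
        have h3 : 0 < ((range n).filter (fun t => t ∉ T ∧ s₀ - 1 < t)).card :=
          Nat.lt_of_lt_of_le Nat.zero_lt_one (le_trans h1 h2)
        obtain ⟨t, ht⟩ := card_pos.1 h3
        rw [mem_filter] at ht
        exact ⟨t, mem_filter.2 ⟨ht.1, ht.2.1, by omega⟩⟩
    obtain ⟨m, hmF, hmle⟩ : ∃ m, m ∈ (range n).filter (fun t => t ∉ T ∧ s₀ ≤ t) ∧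
        ∀ t ∈ (range n).filter (fun t => t ∉ T ∧ s₀ ≤ t), m ≤ t :=
      ⟨_, min'_mem _ hFne, fun t ht => min'_le _ t ht⟩
    rw [mem_filter, mem_range] at hmF
    obtain ⟨hmn, hmT, hs₀m⟩ := hmF
    have hmin : ∀ t, s₀ ≤ t → t < m → t ∈ T := by
      intro t h1 h2
      by_contra h3
      have := hmle t (mem_filter.2 ⟨mem_range.2 (by omega), h3, h1⟩)
      omega
    set j := z + m * k with hj
    -- arithmetic facts
    have hmk : m * k + k ≤ n * k := by
      have : (m + 1) * k ≤ n * k := Nat.mul_le_mul_right k (by omega)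
      rwa [Nat.add_mul, Nat.one_mul] at this
    have hjM : j + k - 1 ≤ M := by
      clear hmin hmle hT hallow hHall hlen ih hc1 hform hcs₀ hs₀ hmT
      rw [hj, hM]; omega
    have hjM' : j ≤ M := by rw [hj, hM]; omega
    have hdivm : (j - z) / k = m := by
      rw [hj, Nat.add_sub_cancel_left]
      exact Nat.mul_div_cancel m hk
    have hjnot : j ∉ blockOcc z k T := by
      rw [mem_blockOcc hk, hdivm]
      rintro (⟨_, h2⟩ | ⟨_, h2⟩)
      · exact absurd h2 (by rw [hj]; exact Nat.not_lt.2 (Nat.le_add_right _ _))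
      · exact hmT h2
    -- firstEmpty
    have hfe : firstEmpty (blockOcc z k T) M c = some j := by
      apply firstEmpty_eq_some (le_trans hcs₀ (by rw [hj]; exact Nat.add_le_add_left (Nat.mul_le_mul_right k hs₀m) z)) hjM' hjnot
      intro i hci hij
      rw [mem_blockOcc hk]
      by_cases hiz : i < z
      · exact Or.inl ⟨le_trans hc1 hci, hiz⟩
      · push_neg at hiz
        refine Or.inr ⟨hiz, ?_⟩
        apply hmin
        · rcases hs₀ with ⟨rfl, _⟩ | ⟨hs1, hcform⟩
          · exact Nat.zero_le _
          · rw [Nat.le_div_iff_mul_le hk]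
            rw [hcform] at hci
            omega
        · rw [Nat.div_lt_iff_lt_mul hk]
          rw [hj] at hij
          omega
    -- the free interval
    have hfree : ∀ i ∈ Ico j (j + k), i ∉ blockOcc z k T := by
      intro i hi
      rw [mem_Ico] at hi
      rw [mem_blockOcc hk]
      push_neg
      rw [hj] at hi
      have hzi : z ≤ i := le_trans (Nat.le_add_right z (m * k)) hi.1
      refine ⟨fun _ => hzi, fun _ => ?_⟩
      have : (i - z) / k = m := by
        apply Nat.div_eq_of_lt_le
        · omega
        · rw [Nat.add_mul, Nat.one_mul]; omega
      rw [this]; exact hmT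
    -- new occupancy
    have hocc : blockOcc z k T ∪ Ico j (j + k) = blockOcc z k (insert m T) := by
      unfold blockOcc
      rw [biUnion_insert, hj]
      ext x
      simp only [mem_union]
      tauto
    -- counting : newF and oldF
    have hcard1 : ∀ s, s < m →
        ((range n).filter (fun t => t ∉ insert m T ∧ s < t)).card =
        ((range n).filter (fun t => t ∉ T ∧ s < t)).card - 1 := by
      intro s hs
      have : (range n).filter (fun t => t ∉ insert m T ∧ s < t) =
          ((range n).filter (fun t => t ∉ T ∧ s < t)).erase m := by
        ext t
        simp only [mem_erase, mem_filter, mem_insert, mem_range]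
        constructor
        · rintro ⟨h1, h2, h3⟩; push_neg at h2; exact ⟨h2.1, h1, h2.2, h3⟩
        · rintro ⟨h1, h2, h3, h4⟩; push_neg; exact ⟨h2, ⟨h1, h3⟩, h4⟩
      rw [this, card_erase_of_mem (mem_filter.2 ⟨mem_range.2 hmn, hmT, hs⟩)]
    have hcard2 : ∀ s, m ≤ s →
        ((range n).filter (fun t => t ∉ insert m T ∧ s < t)) =
        ((range n).filter (fun t => t ∉ T ∧ s < t)) := by
      intro s hs
      apply filter_congr
      intro t ht
      simp only [mem_insert, decide_eq_true_eq]
      constructor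
      · rintro ⟨h1, h2⟩; push_neg at h1; exact ⟨h1.2, h2⟩
      · rintro ⟨h1, h2⟩; exact ⟨by push_neg; exact ⟨by omega, h1⟩, h2⟩
    -- apply IH
    have hIH := ih (insert m T) (by
        intro t ht
        rcases mem_insert.1 ht with rfl | ht'
        · exact mem_range.2 hmn
        · exact hT ht')
      (fun c' hc' => hallow c' (by simp [hc']))
      ?_ ?_
    -- finish
    · rw [List.length_cons, List.replicate_succ]
      simp only [parkAux]
      rw [hfe]
      dsimp only
      rw [if_pos ⟨hfree, hjM⟩, hocc]
      simpa using hIH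
    -- Hall for insert m T
    · intro s
      by_cases hsm : m ≤ s
      · rw [hcard2 s hsm]
        calc cs.countP (fun c' => decide (z + s * k < c'))
            ≤ (c :: cs).countP (fun c' => decide (z + s * k < c')) := by
              rw [List.countP_cons]; exact Nat.le_add_right _ _
          _ ≤ _ := hHall s
      · push_neg at hsm
        by_cases hss : s < s₀
        · -- c is counted at s
          rw [hcard1 s hsm]
          obtain ⟨hs1, hcform⟩ : 1 ≤ s₀ ∧ c = z + s₀ * k := by
            rcases hs₀ with ⟨rfl, _⟩ | h
            · omega
            · exact h
          have hcnt : (c :: cs).countP (fun c' => decide (z + s * k < c')) =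
              cs.countP (fun c' => decide (z + s * k < c')) + 1 := by
            rw [List.countP_cons]
            have : z + s * k < c := by
              rw [hcform]
              have : s * k < s₀ * k := (Nat.mul_lt_mul_right hk).2 hss
              omega
            simp [this]
          have := hHall s
          omega
        · -- s₀ ≤ s < m
          push_neg at hss
          -- oldF (s₀-1  or length bound)
          rcases hs₀ with ⟨rfl, hcz⟩ | ⟨hs1, hcform⟩
          · -- c ≤ z case : use length bound
            have h1 : cs.countP (fun c' => decide (z + s * k < c')) ≤ cs.length :=
              List.countP_le_length
            have hsub : (range n).filter (fun t => t ∉ T) ⊆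
                insert m ((range n).filter (fun t => t ∉ insert m T ∧ s < t)) := by
              intro t ht
              rw [mem_filter, mem_range] at ht
              rcases Nat.lt_or_ge t m with h | h
              · exact absurd (hmin t (Nat.zero_le t) h) ht.2
              · rcases Nat.eq_or_lt_of_le h with rfl | h'
                · exact mem_insert_self _ _
                · refine mem_insert_of_mem (mem_filter.2 ⟨mem_range.2 ht.1, ?_, by omega⟩)
                  rw [mem_insert]; push_neg; exact ⟨by omega, ht.2⟩
            have h2 := card_le_card hsub
            rw [card_insert_of_notMem (by
              rw [mem_filter, mem_insert]; push_neg
              intro _ h; exact absurd rfl h.1)] at h2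
            have h3 := hlen
            simp only [List.length_cons] at h3
            omega
          · -- c = z + s₀ k, s₀ ≥ 1
            have h1 : cs.countP (fun c' => decide (z + s * k < c')) ≤
                cs.countP (fun c' => decide (z + (s₀ - 1) * k < c')) := by
              apply List.countP_mono_left
              intro x _ hx
              simp only [decide_eq_true_eq] at hx ⊢
              have : (s₀ - 1) * k ≤ s * k := Nat.mul_le_mul_right k (by omega)
              omega
            have h2 : (c :: cs).countP (fun c' => decide (z + (s₀ - 1) * k < c')) =
                cs.countP (fun c' => decide (z + (s₀ - 1) * k < c')) + 1 := by
              rw [List.countP_cons]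
              have : z + (s₀ - 1) * k < c := by
                rw [hcform]
                have : (s₀ - 1) * k < s₀ * k := (Nat.mul_lt_mul_right hk).2 (by omega)
                omega
              simp [this]
            have h3 := hHall (s₀ - 1)
            have hsub : (range n).filter (fun t => t ∉ T ∧ s₀ - 1 < t) ⊆
                insert m ((range n).filter (fun t => t ∉ insert m T ∧ s < t)) := by
              intro t ht
              rw [mem_filter, mem_range] at ht
              obtain ⟨h4, h5, h6⟩ := ht
              rcases Nat.lt_or_ge t m with h | h
              · exact absurd (hmin t (by omega) h) h5
              · rcases Nat.eq_or_lt_of_le h with rfl | h'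
                · exact mem_insert_self _ _
                · refine mem_insert_of_mem (mem_filter.2 ⟨mem_range.2 h4, ?_, by omega⟩)
                  rw [mem_insert]; push_neg; exact ⟨by omega, h5⟩
            have h4 := card_le_card hsub
            rw [card_insert_of_notMem (by
              rw [mem_filter, mem_insert]; push_neg
              intro _ h; exact absurd rfl h.1)] at h4
            omega
    -- length bound for insert m T
    · have : (range n).filter (fun t => t ∉ insert m T) =
          ((range n).filter (fun t => t ∉ T)).erase m := by
        ext t
        simp only [mem_erase, mem_filter, mem_insert, mem_range]
        constructor
        · rintro ⟨h1, h2⟩; push_neg at h2; exact ⟨h2.1, h1, h2.2⟩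
        · rintro ⟨h1, h2, h3⟩; exact ⟨h2, by push_neg; exact ⟨h1, h3⟩⟩
      rw [this, card_erase_of_mem (mem_filter.2 ⟨mem_range.2 hmn, hmT⟩)]
      have := hlen
      simp only [List.length_cons] at this
      omega

end S10
namespace S10

lemma firstEmpty_none {occ : Finset ℕ} {M c : ℕ} (h : M < c) : firstEmpty occ M c = none := by
  unfold firstEmpty
  rw [show M + 1 - c = 0 by omega]
  rfl

lemma parkResult_eq (n k z : ℕ) (cs : List ℕ) :
    parkResult (List.replicate n k) cs z =
      parkAux (z - 1 + n * k) (Finset.Ico 1 z) cs (List.replicate n k) := by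
  unfold parkResult
  rw [List.sum_replicate, smul_eq_mul]

lemma getD_map (f : ℕ → ℕ) {l : List ℕ} {i : ℕ} (h : i < l.length) :
    (l.map f).getD i 0 = f (l.getD i 0) := by
  rw [List.getD_eq_getElem _ _ (by simpa using h), List.getD_eq_getElem _ _ h, List.getElem_map]

lemma char_allowed {n' k z : ℕ} (hk : 2 ≤ k) (hz : 0 < z) {cs : List ℕ}
    (hPI : PermInvariant (List.replicate (n' + 1) k) cs z) :
    ∀ c ∈ cs, c ≤ z ∨ ∃ s, 1 ≤ s ∧ s < n' + 1 ∧ c = z + s * k := by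
  have hk0 : 0 < k := by omega
  intro c hc
  by_contra hcon
  push_neg at hcon
  obtain ⟨hcz, hns⟩ := hcon

  have hperm : (c :: cs.erase c).Perm cs := (List.perm_cons_erase hc).symm
  obtain ⟨hlen, hpos, hsome⟩ := hPI _ hperm
  rw [parkResult_eq] at hsome
  set M := z - 1 + (n' + 1) * k with hM
  rw [List.replicate_succ] at hsome
  simp only [parkAux] at hsome
  by_cases hcM : c ≤ M
  swap
  · rw [firstEmpty_none (by omega)] at hsome
    simp at hsome
  · have hfe : firstEmpty (Finset.Ico 1 z) M c = some c :=
      firstEmpty_eq_some le_rfl hcM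
        (by rw [Finset.mem_Ico]; omega)
        (fun i h1 h2 => absurd h2 (Nat.not_lt.2 h1))
    rw [hfe] at hsome
    dsimp only at hsome
    have hfree1 : ∀ i ∈ Finset.Ico c (c + k), i ∉ Finset.Ico 1 z := by
      intro i hi
      rw [Finset.mem_Ico] at hi ⊢
      omega
    by_cases hck : c + k - 1 ≤ M
    swap
    · rw [if_neg (fun h => hck h.2)] at hsome
      simp at hsome
    · rw [if_pos ⟨hfree1, hck⟩] at hsome
      have hsome' : (parkAux M (Finset.Ico 1 z ∪ Finset.Ico c (c + k)) (cs.erase c)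
          (List.replicate n' k)).isSome = true := by simpa using hsome
      obtain ⟨l, hl⟩ := Option.isSome_iff_exists.1 hsome'
      have hlen' : (cs.erase c).length = n' := by
        simp only [List.length_cons, List.length_replicate] at hlen
        omega
      rw [← hlen'] at hl
      obtain ⟨occF, hsub1, hsub2, hcard, hmod⟩ :=
        failA_aux M z k c hk0 (cs.erase c) _ l hl
          (Finset.subset_union_left)
          (Finset.mem_union_right _ (Finset.mem_Ico.2 ⟨le_rfl, by omega⟩))
          (Finset.union_subset
            (fun a ha => by rw [Finset.mem_Ico] at ha ⊢; omega)
            (fun a ha => by rw [Finset.mem_Ico] at ha ⊢; omega))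
          (fun c' hc' => hpos c' (by simp [hc']))
      have hdisj : Disjoint (Finset.Ico 1 z) (Finset.Ico c (c + k)) := by
        rw [Finset.disjoint_left]
        intro a ha ha'
        rw [Finset.mem_Ico] at ha ha'
        omega
      have hcardocc : (Finset.Ico 1 z ∪ Finset.Ico c (c + k)).card = z - 1 + k := by
        rw [Finset.card_union_of_disjoint hdisj, Nat.card_Ico, Nat.card_Ico]
        omega
      have hsucc : (n' + 1) * k = n' * k + k := by rw [Nat.succ_mul]
      have hocceq : occF = Finset.Ico 1 (M + 1) := by
        apply Finset.eq_of_subset_of_card_le hsub2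
        rw [hcard, hcardocc, Nat.card_Ico, hlen', hM]
        omega
      have h0 : (Finset.Ico 1 z ∪ Finset.Ico c (c + k)) ∩ Finset.Ico z c = ∅ := by
        ext i
        simp only [Finset.mem_inter, Finset.mem_union, Finset.mem_Ico, Finset.notMem_empty,
          iff_false]
        omega
      have h1 : occF ∩ Finset.Ico z c = Finset.Ico z c := by
        rw [hocceq]
        apply Finset.inter_eq_right.2
        intro i hi
        rw [Finset.mem_Ico] at hi ⊢
        omega
      rw [h0, h1, Finset.card_empty, Nat.card_Ico, Nat.zero_mod] at hmod
      have hdvd : (c - z) / k * k = c - z :=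
        Nat.div_mul_cancel (Nat.dvd_of_mod_eq_zero hmod)
      set s := (c - z) / k with hs
      have hs1 : 1 ≤ s := by
        rcases Nat.eq_zero_or_pos s with h | h
        · rw [h, Nat.zero_mul] at hdvd; omega
        · exact h
      have hsn : s ≤ n' := by
        by_contra h
        push_neg at h
        have : (n' + 1) * k ≤ s * k := Nat.mul_le_mul_right k h
        omega
      exact hns s hs1 (by omega) (by omega)

lemma char_stats {n k z : ℕ} (hk : 2 ≤ k) (hz : 0 < z) {cs : List ℕ}
    (hPI : PermInvariant (List.replicate n k) cs z) :
    ∀ i < n, (orderStats cs).getD i 0 ≤ z + i * k := by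
  have hk0 : 0 < k := by omega
  intro i hi
  by_contra hcon
  push_neg at hcon
  obtain ⟨hlen0, _, _⟩ := hPI cs (List.Perm.refl cs)
  rw [List.length_replicate] at hlen0
  have hoslen : (orderStats cs).length = n := by rw [orderStats_length, hlen0]
  have hcount : n - i ≤ (orderStats cs).countP (fun c => decide (z + i * k < c)) :=
    hoslen ▸ le_countP_of_getD (orderStats_sorted cs) (by omega) hcon
  set p : ℕ → Bool := fun c => decide (z + i * k < c) with hp
  have hcount2 : n - i ≤ cs.countP p :=
    le_trans hcount (le_of_eq (((orderStats_perm cs)).countP_eq p))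
  set h1 := (cs.filter p).length with hh1
  have hh1' : cs.countP p = h1 := List.countP_eq_length_filter
  have hh1n : h1 ≤ n := by
    rw [hh1]
    exact le_trans (List.length_filter_le _ _) (le_of_eq hlen0)
  have hperm : (cs.filter p ++ cs.filter (fun c => !p c)).Perm cs := List.filter_append_perm p cs
  obtain ⟨hlen, hpos, hsome⟩ := hPI _ hperm
  rw [parkResult_eq] at hsome
  set M := z - 1 + n * k with hM
  rw [show n = h1 + (n - h1) by omega, List.replicate_add] at hsome
  have hpre := parkAux_prefix M (cs.filter p) (Finset.Ico 1 z) (List.replicate h1 k)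
    (cs.filter fun c => !p c) (List.replicate (n - h1) k) (by simp [hh1]) hsome
  obtain ⟨l, hl⟩ := Option.isSome_iff_exists.1 hpre
  obtain ⟨occF, hsub, hcard⟩ := failB_aux M (z + i * k + 1) (cs.filter p)
    (List.replicate h1 k) (Finset.Ico 1 z) l hl
    (by
      intro c' hc'
      have := List.of_mem_filter hc'
      rw [hp] at this
      simp only [decide_eq_true_eq] at this
      omega)
    (by intro y hy; rw [List.eq_of_mem_replicate hy]; omega)
  have hcardle := Finset.card_le_card hsub
  have hunle := Finset.card_union_le (Finset.Ico 1 z) (Finset.Icc (z + i * k + 1) M)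
  rw [hcard, List.sum_replicate, smul_eq_mul, Nat.card_Ico] at hcardle
  rw [Nat.card_Ico, Nat.card_Icc] at hunle
  -- arithmetic contradiction
  have f1 : (n - i) * k ≤ h1 * k := Nat.mul_le_mul_right k (by omega)
  have f2 : (n - i) * k = n * k - i * k := Nat.sub_mul n i k
  have f3 : (i + 1) * k ≤ n * k := Nat.mul_le_mul_right k (by omega)
  have f4 : (i + 1) * k = i * k + k := Nat.succ_mul i k
  omega

lemma char_bwd {n k z : ℕ} (hk : 2 ≤ k) (hz : 0 < z) {cs : List ℕ}
    (h1 : cs.length = n) (h2 : ∀ c ∈ cs, 1 ≤ c)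
    (h3 : ∀ c ∈ cs, c ≤ z ∨ ∃ s, 1 ≤ s ∧ s < n ∧ c = z + s * k)
    (h4 : ∀ i < n, (orderStats cs).getD i 0 ≤ z + i * k) :
    PermInvariant (List.replicate n k) cs z := by
  have hk0 : 0 < k := by omega
  intro cs' hperm
  have hlen' : cs'.length = n := by rw [hperm.length_eq, h1]
  refine ⟨by rw [hlen', List.length_replicate], fun c hc => h2 c (hperm.subset hc), ?_⟩
  rw [parkResult_eq]
  have hempty : blockOcc z k (∅ : Finset ℕ) = Finset.Ico 1 z := by
    unfold blockOcc
    rw [Finset.biUnion_empty, Finset.union_empty]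
  have hos : (orderStats cs).length = n := by rw [orderStats_length, h1]
  have := parks z k n hz hk0 cs' ∅ (Finset.empty_subset _)
    (by
      intro c hc
      have hc' := hperm.subset hc
      refine ⟨h2 c hc', ?_⟩
      rcases h3 c hc' with h | ⟨s, hs1, _, rfl⟩
      · exact Or.inl h
      · exact Or.inr ⟨s, hs1, rfl⟩)
    (by
      intro s
      have hcnt : cs'.countP (fun c => decide (z + s * k < c)) =
          (orderStats cs).countP (fun c => decide (z + s * k < c)) := by
        rw [hperm.countP_eq, ((orderStats_perm cs)).countP_eq]
      by_cases hsn : s < n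
      · have hle := countP_le_of_getD (orderStats_sorted cs) (by omega : s < (orderStats cs).length)
          (h4 s hsn)
        have hItoF : (Finset.range n).filter (fun t => t ∉ (∅ : Finset ℕ) ∧ s < t) =
            Finset.Ico (s + 1) n := by
          ext t
          simp only [Finset.mem_filter, Finset.mem_range, Finset.mem_Ico,
            Finset.notMem_empty, not_false_iff, true_and]
          omega
        rw [hItoF, Nat.card_Ico, hcnt]
        omega
      · have : cs'.countP (fun c => decide (z + s * k < c)) = 0 := by
          rw [List.countP_eq_zero]
          intro c hc
          simp only [decide_eq_true_eq, Nat.not_lt]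
          rcases h3 c (hperm.subset hc) with h | ⟨t, _, htn, rfl⟩
          · exact le_trans h (Nat.le_add_right _ _)
          · have : t * k ≤ s * k := Nat.mul_le_mul_right k (by omega)
            omega
        rw [this]
        exact Nat.zero_le _)
    (by
      have : (Finset.range n).filter (fun t => t ∉ (∅ : Finset ℕ)) = Finset.range n := by
        apply Finset.filter_true_of_mem
        intro t _
        exact Finset.notMem_empty t
      rw [this, Finset.card_range, hlen'])
  rw [hempty, hlen'] at this
  exact this

theorem char {n k z : ℕ} (hn : 0 < n) (hk : 2 ≤ k) (hz : 0 < z) (cs : List ℕ) :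
    PermInvariant (List.replicate n k) cs z ↔
      (cs.length = n ∧ (∀ c ∈ cs, 1 ≤ c) ∧
       (∀ c ∈ cs, c ≤ z ∨ ∃ s, 1 ≤ s ∧ s < n ∧ c = z + s * k) ∧
       (∀ i < n, (orderStats cs).getD i 0 ≤ z + i * k)) := by
  constructor
  · intro hPI
    obtain ⟨hlen, hpos, _⟩ := hPI cs (List.Perm.refl cs)
    rw [List.length_replicate] at hlen
    obtain ⟨n', rfl⟩ : ∃ n', n = n' + 1 := ⟨n - 1, by omega⟩
    exact ⟨hlen, hpos, char_allowed hk hz hPI, char_stats hk hz hPI⟩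
  · rintro ⟨h1, h2, h3, h4⟩
    exact char_bwd hk hz h1 h2 h3 h4

end S10
namespace S10

lemma phi_mono {z k : ℕ} : Monotone (fun c => if c ≤ z then c else z + (c - z) / k) := by
  intro a b hab
  dsimp only
  split_ifs with h1 h2 h2
  · exact hab
  · exact le_trans h1 (Nat.le_add_right _ _)
  · omega
  · exact Nat.add_le_add_left (Nat.div_le_div_right (Nat.sub_le_sub_right hab z)) z

lemma psi_mono {z k : ℕ} : Monotone (fun x => if x ≤ z then x else z + (x - z) * k) := by
  intro a b hab
  dsimp only
  split_ifs with h1 h2 h2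
  · exact hab
  · exact le_trans h1 (Nat.le_add_right _ _)
  · omega
  · exact Nat.add_le_add_left (Nat.mul_le_mul_right k (Nat.sub_le_sub_right hab z)) z

end S10

theorem stmt10 (n k z : ℕ) (hn : 0 < n) (hk : 2 ≤ k) (hz : 0 < z) :
    Set.BijOn (fun cs : List ℕ => cs.map (fun c => if c ≤ z then c else z + (c - z) / k))
      {cs : List ℕ | PermInvariant (List.replicate n k) cs z}
      {xs : List ℕ | IsUPF ((List.range n).map (fun i => z + i)) xs} := by
  have hk0 : 0 < k := by omega
  set φ : ℕ → ℕ := fun c => if c ≤ z then c else z + (c - z) / k with hφ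
  set ψ : ℕ → ℕ := fun x => if x ≤ z then x else z + (x - z) * k with hψ
  have hulen : ((List.range n).map (fun i => z + i)).length = n := by simp
  have hugetD : ∀ i < n, ((List.range n).map (fun i => z + i)).getD i 0 = z + i := by
    intro i hi
    rw [List.getD_eq_getElem _ _ (by simpa using hi), List.getElem_map, List.getElem_range]
  -- φ on allowed values
  have hφz : ∀ c, c ≤ z → φ c = c := fun c h => if_pos h
  have hφs : ∀ s, 1 ≤ s → φ (z + s * k) = z + s := by
    intro s hs
    have h1 : 1 ≤ s * k := Nat.mul_pos hs hk0
    rw [hφ]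
    simp only
    rw [if_neg (by omega), Nat.add_sub_cancel_left, Nat.mul_div_cancel s hk0]
  have hψz : ∀ x, x ≤ z → ψ x = x := fun x h => if_pos h
  have hψs : ∀ x, z < x → ψ x = z + (x - z) * k := by
    intro x h
    rw [hψ]
    simp only
    rw [if_neg (by omega)]
  -- roundtrips
  have hpsiphil : ∀ c, 1 ≤ c → (c ≤ z ∨ ∃ s, 1 ≤ s ∧ c = z + s * k) → ψ (φ c) = c := by
    intro c _ hc
    rcases hc with h | ⟨s, hs, rfl⟩
    · rw [hφz c h, hψz c h]
    · rw [hφs s hs, hψs _ (by omega), Nat.add_sub_cancel_left]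
  have hphipsil : ∀ x, 1 ≤ x → φ (ψ x) = x := by
    intro x hx
    by_cases h : x ≤ z
    · rw [hψz x h, hφz x h]
    · push_neg at h
      rw [hψs x h]
      have h1 : 1 ≤ (x - z) * k := Nat.mul_pos (by omega) hk0
      rw [hφ]
      simp only
      rw [if_neg (by omega), Nat.add_sub_cancel_left, Nat.mul_div_cancel _ hk0]
      omega
  refine ⟨?_, ?_, ?_⟩
  · -- MapsTo
    intro cs hcs
    rw [Set.mem_setOf_eq, S10.char hn hk hz] at hcs
    obtain ⟨hlen, hpos, hallow, hstat⟩ := hcs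
    rw [Set.mem_setOf_eq]
    refine ⟨by rw [List.length_map, hlen, hulen], ?_, ?_⟩
    · intro x hx
      obtain ⟨c, hc, rfl⟩ := List.mem_map.1 hx
      rcases hallow c hc with h | ⟨s, hs, _, rfl⟩
      · rw [hφz c h]; exact hpos c hc
      · rw [hφs s hs]; omega
    · intro i hi
      rw [hulen] at hi
      rw [hugetD i hi]
      have hosl : (orderStats cs).length = n := by rw [S10.orderStats_length, hlen]
      show (orderStats (cs.map φ)).getD i 0 ≤ z + i
      rw [S10.orderStats_map_mono S10.phi_mono, S10.getD_map φ (by omega)]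
      have hx := hstat i hi
      set x := (orderStats cs).getD i 0 with hxd
      have hxmem : x ∈ cs := by
        apply (S10.orderStats_perm cs).subset
        rw [hxd, List.getD_eq_getElem _ _ (by omega)]
        exact List.getElem_mem _
      rcases hallow x hxmem with h | ⟨s, hs, _, hxe⟩
      · rw [hφz x h]; omega
      · rw [hxe, hφs s hs]
        have : s * k ≤ i * k := by omega
        have := Nat.le_of_mul_le_mul_right this hk0
        omega
  · -- InjOn
    intro a ha b hb heq
    rw [Set.mem_setOf_eq, S10.char hn hk hz] at ha hb
    have hround : ∀ cs : List ℕ, (∀ c ∈ cs, 1 ≤ c) →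
        (∀ c ∈ cs, c ≤ z ∨ ∃ s, 1 ≤ s ∧ s < n ∧ c = z + s * k) →
        (cs.map φ).map ψ = cs := by
      intro cs h1 h2
      rw [List.map_map]
      conv_rhs => rw [← List.map_id cs]
      apply List.map_congr_left
      intro c hc
      simp only [Function.comp_apply, id_eq]
      apply hpsiphil c (h1 c hc)
      rcases h2 c hc with h | ⟨s, hs, _, rfl⟩
      · exact Or.inl h
      · exact Or.inr ⟨s, hs, rfl⟩
    calc a = (a.map φ).map ψ := (hround a ha.2.1 ha.2.2.1).symm
    _ = (b.map φ).map ψ := by rw [show a.map φ = b.map φ from heq]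
    _ = b := hround b hb.2.1 hb.2.2.1
  · -- SurjOn
    intro xs hxs
    rw [Set.mem_setOf_eq] at hxs
    obtain ⟨hlen, hpos, hstat⟩ := hxs
    rw [hulen] at hlen
    have hosl : (orderStats xs).length = n := by rw [S10.orderStats_length, hlen]
    have hbound : ∀ x ∈ xs, x ≤ z + (n - 1) := by
      intro x hx
      have h1 : x ≤ (orderStats xs).getD ((orderStats xs).length - 1) 0 :=
        S10.mem_le_getD_last (S10.orderStats_sorted xs) ((S10.orderStats_perm xs).mem_iff.2 hx)
      have h2 := hstat (n - 1) (by rw [hulen]; omega)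
      rw [hugetD (n - 1) (by omega)] at h2
      rw [hosl] at h1
      omega
    refine ⟨xs.map ψ, ?_, ?_⟩
    · rw [Set.mem_setOf_eq, S10.char hn hk hz]
      refine ⟨by rw [List.length_map, hlen], ?_, ?_, ?_⟩
      · intro c hc
        obtain ⟨x, hx, rfl⟩ := List.mem_map.1 hc
        by_cases h : x ≤ z
        · rw [hψz x h]; exact hpos x hx
        · push_neg at h; rw [hψs x h]; omega
      · intro c hc
        obtain ⟨x, hx, rfl⟩ := List.mem_map.1 hc
        by_cases h : x ≤ z
        · rw [hψz x h]; exact Or.inl h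
        · push_neg at h
          rw [hψs x h]
          refine Or.inr ⟨x - z, by omega, ?_, rfl⟩
          have := hbound x hx
          omega
      · intro i hi
        show (orderStats (xs.map ψ)).getD i 0 ≤ z + i * k
        rw [S10.orderStats_map_mono S10.psi_mono, S10.getD_map ψ (by omega)]
        have h2 := hstat i (by rw [hulen]; exact hi)
        rw [hugetD i hi] at h2
        set y := (orderStats xs).getD i 0 with hyd
        by_cases h : y ≤ z
        · rw [hψz y h]; omega
        · push_neg at h
          rw [hψs y h]
          have : (y - z) * k ≤ i * k := Nat.mul_le_mul_right k (by omega)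
          omega
    · show (List.map ψ xs).map φ = xs
      rw [List.map_map]
      conv_rhs => rw [← List.map_id xs]
      apply List.map_congr_left
      intro x hx
      simp only [Function.comp_apply, id_eq]
      exact hphipsil x (hpos x hx)
end

section
/- Let n ≥ 2, 1 ≤ r < n, a < b positive integers, z ∈ Z_+, and y = (a^r, b^{n-r}) (r cars of length a followed by n-r cars of length b). If c is a permutation-invariant parking sequence for (y;z), then in the final parking configuration of c, all r cars of length a park within the interval of spots [z, z+ra-1]. -/
open Finset

theorem find?_range'_earlier {p : ℕ → Bool} : ∀ (len s j : ℕ),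
    (List.range' s len).find? p = some j → ∀ i, s ≤ i → i < j → p i = false := by
  intro len
  induction len with
  | zero => intro s j h; simp [List.range'] at h
  | succ k ih =>
    intro s j h i hsi hij
    rw [List.range'] at h
    rw [List.find?_cons] at h
    rcases hp : p s with _|_
    · simp only [hp] at h
      rcases Nat.eq_or_lt_of_le hsi with rfl | hlt
      · exact hp
      · exact ih (s+1) j h i hlt hij
    · simp only [hp] at h
      injection h with h
      exact absurd hij (by omega)

/-- Full spec of `firstEmpty` on the success case. -/
theorem firstEmpty_spec {occ : Finset ℕ} {M c j : ℕ}
    (h : firstEmpty occ M c = some j) :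
    j ∉ occ ∧ c ≤ j ∧ j ≤ M ∧ ∀ i, c ≤ i → i < j → i ∈ occ := by
  have hmem := List.mem_of_find?_eq_some h
  rw [List.mem_range'_1] at hmem
  have hM : c ≤ M + 1 := by
    by_contra hc
    have : M + 1 - c = 0 := by omega
    rw [firstEmpty, this] at h
    simp [List.range'] at h
  have hj := List.find?_some h
  refine ⟨by simpa using hj, hmem.1, by omega, ?_⟩
  intro i hci hij
  have := find?_range'_earlier (M + 1 - c) c j h i hci hij
  simpa using this

/-- Inversion for a successful `parkAux` step. -/
theorem parkAux_cons {M : ℕ} {occ : Finset ℕ} {c y : ℕ} {cs ys : List ℕ} {L : List ℕ}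
    (h : parkAux M occ (c :: cs) (y :: ys) = some L) :
    ∃ j L', firstEmpty occ M c = some j ∧
      (∀ i ∈ Finset.Ico j (j + y), i ∉ occ) ∧ j + y - 1 ≤ M ∧
      parkAux M (occ ∪ Finset.Ico j (j + y)) cs ys = some L' ∧ L = j :: L' := by
  rw [parkAux] at h
  split at h
  · simp at h
  · rename_i j hfe
    split_ifs at h with hcond
    · rcases Option.map_eq_some_iff.mp h with ⟨L', hL', rfl⟩
      exact ⟨j, L', hfe, hcond.1, hcond.2, hL', rfl⟩

theorem parkAux_nil_cons {M : ℕ} {occ : Finset ℕ} {y : ℕ} {ys : List ℕ} :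
    parkAux M occ [] (y :: ys) = none := rfl

theorem parkAux_cons_nil {M : ℕ} {occ : Finset ℕ} {c : ℕ} {cs : List ℕ} :
    parkAux M occ (c :: cs) [] = none := rfl

theorem parkAux_nil {M : ℕ} {occ : Finset ℕ} : parkAux M occ [] [] = some [] := rfl

theorem card_union_interval {occ : Finset ℕ} {j y : ℕ}
    (hfree : ∀ i ∈ Finset.Ico j (j + y), i ∉ occ) :
    (occ ∪ Finset.Ico j (j + y)).card = occ.card + y := by
  rw [Finset.card_union_of_disjoint]
  · simp
  · rw [Finset.disjoint_right]; intro x hx; exact hfree x hx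

/-- Cars all preferring `≥ u` stay in `[u, M]`. -/
theorem parkRight {M u z : ℕ} :
    ∀ (cs ys : List ℕ) (occ : Finset ℕ) (L : List ℕ),
    parkAux M occ cs ys = some L →
    (∀ c ∈ cs, u ≤ c) →
    occ ⊆ Finset.Ico 1 z ∪ Finset.Ico u (M + 1) →
    ∃ occ' : Finset ℕ, occ ⊆ occ' ∧ occ'.card = occ.card + ys.sum ∧
      occ' ⊆ Finset.Ico 1 z ∪ Finset.Ico u (M + 1) := by
  intro cs
  induction cs with
  | nil =>
    intro ys occ L h _ hocc
    cases ys with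
    | nil => exact ⟨occ, le_refl _, by simp, hocc⟩
    | cons y ys => exact (by have h' : (none : Option (List ℕ)) = some L := (show parkAux M occ [] (y::ys) = none from rfl) ▸ h; cases h')
  | cons c cs ih =>
    intro ys occ L h hpref hocc
    cases ys with
    | nil => exact (by have h' : (none : Option (List ℕ)) = some L := (show parkAux M occ (c::cs) [] = none from rfl) ▸ h; cases h')
    | cons y ys =>
      obtain ⟨j, L', hfe, hfree, hfit, hrec, rfl⟩ := parkAux_cons h
      obtain ⟨hjnot, hcj, hjM, hbefore⟩ := firstEmpty_spec hfe
      have hju : u ≤ j := le_trans (hpref c (by simp)) hcj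
      have hsub : occ ∪ Finset.Ico j (j + y) ⊆ Finset.Ico 1 z ∪ Finset.Ico u (M + 1) := by
        intro x hx
        rcases Finset.mem_union.mp hx with hx | hx
        · exact hocc hx
        · rw [Finset.mem_Ico] at hx
          exact Finset.mem_union_right _ (Finset.mem_Ico.mpr ⟨le_trans hju hx.1, by omega⟩)
      obtain ⟨occ', h1, h2, h3⟩ := ih ys _ L' hrec (fun x hx => hpref x (by simp [hx])) hsub
      refine ⟨occ', le_trans Finset.subset_union_left h1, ?_, h3⟩
      rw [h2, card_union_interval hfree]
      simp [List.sum_cons]; omega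

/-- The frontier lemma: cars either prefer `≥ u` or have length `b` and small
preference; the low region fills in `b`-blocks. -/
theorem parkFrontier {M u b f0 : ℕ} (hf0 : 1 ≤ f0) :
    ∀ (cs ys : List ℕ) (occ : Finset ℕ) (f : ℕ) (L : List ℕ),
    parkAux M occ cs ys = some L →
    (∀ p ∈ cs.zip ys, u ≤ p.1 ∨ (p.2 = b ∧ p.1 ≤ f0)) →
    (∀ c ∈ cs, 1 ≤ c) →
    cs.length = ys.length →
    f0 ≤ f → f ≤ u → u ∈ occ →
    Finset.Ico 1 f ⊆ occ → occ ⊆ Finset.Ico 1 f ∪ Finset.Ico u (M + 1) →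
    ∃ (m : ℕ) (occ' : Finset ℕ), occ ⊆ occ' ∧ occ'.card = occ.card + ys.sum ∧
      f + m * b ≤ u ∧ Finset.Ico 1 (f + m * b) ⊆ occ' ∧
      occ' ⊆ Finset.Ico 1 (f + m * b) ∪ Finset.Ico u (M + 1) := by
  intro cs
  induction cs with
  | nil =>
    intro ys occ f L h _ _ hlen hf0f hfu hu hlow hocc
    cases ys with
    | nil => exact ⟨0, occ, le_refl _, by simp, by simpa using hfu, by simpa using hlow,
        by simpa using hocc⟩
    | cons y ys => simp at hlen
  | cons c cs ih =>
    intro ys occ f L h hQ hpos hlen hf0f hfu hu hlow hocc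
    cases ys with
    | nil => simp at hlen
    | cons y ys =>
      obtain ⟨j, L', hfe, hfree, hfit, hrec, rfl⟩ := parkAux_cons h
      obtain ⟨hjnot, hcj, hjM, hbefore⟩ := firstEmpty_spec hfe
      have hc1 : 1 ≤ c := hpos c (by simp)
      have hQ' : ∀ p ∈ cs.zip ys, u ≤ p.1 ∨ (p.2 = b ∧ p.1 ≤ f0) := by
        intro p hp; exact hQ p (by simp [hp])
      have hpos' : ∀ x ∈ cs, 1 ≤ x := fun x hx => hpos x (by simp [hx])
      have hlen' : cs.length = ys.length := by simpa using hlen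
      -- dichotomy on where the car parks
      by_cases hju : u ≤ j
      · -- parks in the right part; frontier unchanged
        have hsub : occ ∪ Finset.Ico j (j + y) ⊆ Finset.Ico 1 f ∪ Finset.Ico u (M + 1) := by
          intro x hx
          rcases Finset.mem_union.mp hx with hx | hx
          · exact hocc hx
          · rw [Finset.mem_Ico] at hx
            exact Finset.mem_union_right _ (Finset.mem_Ico.mpr ⟨le_trans hju hx.1, by omega⟩)
        obtain ⟨m, occ', h1, h2, h3, h4, h5⟩ := ih ys _ f L' hrec hQ' hpos' hlen' hf0f hfu
          (Finset.mem_union_left _ hu) (le_trans hlow Finset.subset_union_left) hsub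
        refine ⟨m, occ', le_trans Finset.subset_union_left h1, ?_, h3, h4, h5⟩
        rw [h2, card_union_interval hfree]
        simp [List.sum_cons]; omega
      · -- j < u : the car must be a small b-car parking exactly at the frontier
        push_neg at hju
        have hcu : ¬ u ≤ c := fun hc => absurd (le_trans hc hcj) (by omega)
        rcases hQ (c, y) (by simp) with hc | ⟨hyb, hcf0⟩
        · exact absurd hc hcu
        replace hyb : y = b := hyb
        replace hcf0 : c ≤ f0 := hcf0
        rw [hyb] at hfree hfit hrec ⊢
        -- f < u (since if f = u then j ∉ occ ⊇ Ico 1 u forces j ≥ u)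
        have hflt : f < u := by
          rcases Nat.lt_or_ge f u with h' | h'
          · exact h'
          · exfalso
            have : j ∈ Finset.Ico 1 f := Finset.mem_Ico.mpr ⟨hc1.trans hcj, by omega⟩
            exact hjnot (hlow this)
        have hfnot : f ∉ occ := by
          intro hf
          rcases Finset.mem_union.mp (hocc hf) with h' | h'
          · simp [Finset.mem_Ico] at h'
          · rw [Finset.mem_Ico] at h'; omega
        have hjf : j = f := by
          rcases Nat.lt_trichotomy j f with h' | h' | h'
          · exact absurd (hlow (Finset.mem_Ico.mpr ⟨hc1.trans hcj, h'⟩)) hjnot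
          · exact h'
          · exact absurd (hbefore f (le_trans hcf0 hf0f) h') hfnot
        subst hjf
        have hfb : j + b ≤ u := by
          by_contra hcon
          push_neg at hcon
          exact hfree u (Finset.mem_Ico.mpr ⟨by omega, hcon⟩) hu
        have hlow2 : Finset.Ico 1 (j + b) ⊆ occ ∪ Finset.Ico j (j + b) := by
          intro x hx
          rw [Finset.mem_Ico] at hx
          rcases Nat.lt_or_ge x j with h' | h'
          · exact Finset.mem_union_left _ (hlow (Finset.mem_Ico.mpr ⟨hx.1, h'⟩))
          · exact Finset.mem_union_right _ (Finset.mem_Ico.mpr ⟨h', hx.2⟩)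
        have hsub2 : occ ∪ Finset.Ico j (j + b) ⊆
            Finset.Ico 1 (j + b) ∪ Finset.Ico u (M + 1) := by
          intro x hx
          rcases Finset.mem_union.mp hx with hx | hx
          · rcases Finset.mem_union.mp (hocc hx) with h' | h'
            · rw [Finset.mem_Ico] at h'
              exact Finset.mem_union_left _ (Finset.mem_Ico.mpr ⟨h'.1, by omega⟩)
            · exact Finset.mem_union_right _ h'
          · rw [Finset.mem_Ico] at hx
            exact Finset.mem_union_left _ (Finset.mem_Ico.mpr ⟨by omega, hx.2⟩)
        obtain ⟨m, occ', h1, h2, h3, h4, h5⟩ := ih ys _ (j + b) L' hrec hQ' hpos' hlen'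
          (by omega) hfb (Finset.mem_union_left _ hu) hlow2 hsub2
        refine ⟨m + 1, occ', le_trans Finset.subset_union_left h1, ?_, ?_, ?_, ?_⟩
        · rw [h2, card_union_interval hfree]
          simp [List.sum_cons]; omega
        · have : j + (m + 1) * b = j + b + m * b := by ring
          omega
        · have : j + (m + 1) * b = j + b + m * b := by ring
          rw [this]; exact h4
        · have : j + (m + 1) * b = j + b + m * b := by ring
          rw [this]; exact h5

theorem exists_min (l : List ℕ) (h : l ≠ []) : ∃ u ∈ l, ∀ x ∈ l, u ≤ x := by
  induction l with
  | nil => simp at h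
  | cons c cs ih =>
    cases cs with
    | nil => exact ⟨c, by simp, by simp⟩
    | cons d ds =>
      obtain ⟨u, hu, hmin⟩ := ih (by simp)
      rcases le_total c u with h' | h'
      · refine ⟨c, by simp, ?_⟩
        intro x hx
        rcases List.mem_cons.mp hx with rfl | hx
        · rfl
        · exact le_trans h' (hmin x hx)
      · refine ⟨u, by simp [hu], ?_⟩
        intro x hx
        rcases List.mem_cons.mp hx with rfl | hx
        · exact h'
        · exact hmin x hx

theorem mem_drop_ys {a b r n k : ℕ} (hk : r ≤ k) {x : ℕ}
    (hx : x ∈ (List.replicate r a ++ List.replicate (n - r) b).drop k) : x = b := by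
  have hd := List.drop_length_add_append (l₁ := List.replicate r a) (l₂ := List.replicate (n - r) b) (k - r)
  rw [show (List.replicate r a).length + (k - r) = k by simp; omega] at hd
  rw [hd] at hx
  exact ((List.mem_replicate).mp (List.mem_of_mem_drop hx)).2

/-- Analysis of a run `u :: rest` from a clean trailer `[1, f0)`:
if success then `u ≡ f0 (mod b)`. -/
theorem runAnalysis {M b u f0 : ℕ} (hf0 : 1 ≤ f0) (hfu : f0 < u)
    {cs1 ys1 : List ℕ} {y1 : ℕ} {L : List ℕ}
    (hrun : parkAux M (Finset.Ico 1 f0) (u :: cs1) (y1 :: ys1) = some L)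
    (hy1 : 1 ≤ y1)
    (hQ : ∀ p ∈ cs1.zip ys1, u ≤ p.1 ∨ (p.2 = b ∧ p.1 ≤ f0))
    (hpos : ∀ c ∈ cs1, 1 ≤ c)
    (hlen : cs1.length = ys1.length)
    (hcard : f0 - 1 + (y1 + ys1.sum) = M) :
    ∃ m, u = f0 + m * b := by
  obtain ⟨j, L', hfe, hfree, hfit, hrec, rfl⟩ := parkAux_cons hrun
  obtain ⟨hjnot, hcj, hjM, hbefore⟩ := firstEmpty_spec hfe
  have hju : j = u := by
    rcases Nat.lt_or_ge u j with h' | h'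
    · have := hbefore u (le_refl u) h'
      rw [Finset.mem_Ico] at this; omega
    · omega
  rw [hju] at hfree hfit hrec hjM
  have hu1 : u ∈ Finset.Ico 1 f0 ∪ Finset.Ico u (u + y1) :=
    Finset.mem_union_right _ (Finset.mem_Ico.mpr ⟨le_refl u, by omega⟩)
  have hocc1 : (Finset.Ico 1 f0 ∪ Finset.Ico u (u + y1)) ⊆
      Finset.Ico 1 f0 ∪ Finset.Ico u (M + 1) := by
    intro x hx
    rcases Finset.mem_union.mp hx with hx | hx
    · exact Finset.mem_union_left _ hx
    · rw [Finset.mem_Ico] at hx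
      exact Finset.mem_union_right _ (Finset.mem_Ico.mpr ⟨hx.1, by omega⟩)
  obtain ⟨m, occ', hsub, hcard', hmu, hlowE, hoccE⟩ :=
    parkFrontier (u := u) (b := b) hf0 cs1 ys1 _ f0 L' hrec hQ hpos hlen (le_refl f0)
      (le_of_lt hfu) hu1 Finset.subset_union_left hocc1
  have hc1 : (Finset.Ico 1 f0 ∪ Finset.Ico u (u + y1)).card = (f0 - 1) + y1 := by
    rw [card_union_interval hfree, Nat.card_Ico]
  have hcM : occ'.card = M := by rw [hcard', hc1]; omega
  have hcle : occ'.card ≤ (f0 + m * b - 1) + (M + 1 - u) := by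
    calc occ'.card ≤ (Finset.Ico 1 (f0 + m * b) ∪ Finset.Ico u (M + 1)).card :=
          Finset.card_le_card hoccE
    _ ≤ (Finset.Ico 1 (f0 + m * b)).card + (Finset.Ico u (M + 1)).card :=
          Finset.card_union_le _ _
    _ = (f0 + m * b - 1) + (M + 1 - u) := by rw [Nat.card_Ico, Nat.card_Ico]
  have hum : u ≤ M := by omega
  exact ⟨m, by omega⟩

/-- Necessity, level 0 : a permutation-invariant sequence has at most `r-1`
preferences exceeding `z`. -/
theorem necessity0 {n r a b z : ℕ} (hr1 : 1 ≤ r) (hrn : r < n) (ha : 0 < a)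
    (hab : a < b) (hz : 0 < z) {cs : List ℕ} (hlen : cs.length = n)
    (hperm : PermInvariant (List.replicate r a ++ List.replicate (n - r) b) cs z) :
    cs.countP (fun x => decide (z < x)) ≤ r - 1 := by
  set p : ℕ → Bool := fun x => decide (z < x) with hp
  set ys := List.replicate r a ++ List.replicate (n - r) b with hys
  have hSum : ys.sum = r * a + (n - r) * b := by
    simp [hys, List.sum_replicate, smul_eq_mul]
  have hylen : ys.length = n := by simp [hys]; omega
  have hysmem : ∀ x ∈ ys, 0 < x := by
    intro x hx
    rcases List.mem_append.mp hx with hx | hx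
    · rw [(List.mem_replicate.mp hx).2]; exact ha
    · rw [(List.mem_replicate.mp hx).2]; omega
  set M := z - 1 + ys.sum with hM
  by_contra hcon
  push_neg at hcon
  have hq : r ≤ cs.countP p := by omega
  set bigs := cs.filter p with hbigs
  set smalls := cs.filter (fun x => !p x) with hsmalls
  have hqlen : bigs.length = cs.countP p := (List.countP_eq_length_filter (p := p) (l := cs)).symm
  have hqn : bigs.length ≤ n := by rw [← hlen, hbigs]; exact List.length_filter_le _ _
  have hperm0 : (bigs ++ smalls).Perm cs := List.filter_append_perm p cs
  have hslen : bigs.length + smalls.length = n := by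
    have := hperm0.length_eq
    simpa [hlen] using this
  have hbne : bigs ≠ [] := by
    intro h; rw [h] at hqlen; simp at hqlen; omega
  obtain ⟨u, humem, humin⟩ := exists_min bigs hbne
  have huz : z < u := by
    have := List.of_mem_filter humem; simpa [hp] using this
  set l1 := bigs.erase u with hl1
  have hl1len : l1.length = bigs.length - 1 := List.length_erase_of_mem humem
  have hl1big : ∀ x ∈ l1, u ≤ x := fun x hx => humin x (List.mem_of_mem_erase hx)
  have hsmallz : ∀ x ∈ smalls, x ≤ z := by
    intro x hx
    have := List.of_mem_filter hx
    simp [hp] at this; omega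
  -- the A0 arrangement
  have hA0perm : (u :: (l1 ++ smalls)).Perm cs := by
    have h1 : (u :: l1).Perm bigs := (List.perm_cons_erase humem).symm
    have h2 : ((u :: l1) ++ smalls).Perm (bigs ++ smalls) := h1.append_right smalls
    exact h2.trans hperm0
  obtain ⟨hlenA0, hposA0, hsomeA0⟩ := hperm _ hA0perm
  obtain ⟨L0, hL0⟩ := Option.isSome_iff_exists.mp hsomeA0
  rw [parkResult, ← hM] at hL0
  have hyscons : ys = a :: (List.replicate (r - 1) a ++ List.replicate (n - r) b) := by
    rw [hys]
    cases r with
    | zero => omega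
    | succ r' => simp [List.replicate_succ]
  set ysT := List.replicate (r - 1) a ++ List.replicate (n - r) b with hysT
  have hysTlen : ysT.length = n - 1 := by simp [hysT]; omega
  have hysTsum : a + ysT.sum = ys.sum := by
    rw [hyscons]; simp
  have hlen01 : (l1 ++ smalls).length = ysT.length := by
    have := hlenA0
    rw [hylen] at this
    simp at this ⊢
    omega
  -- zip condition for the A0 tail
  have hdropb : ∀ k, r ≤ k → ∀ x ∈ ysT.drop (k - 1), x = b := by
    intro k hk x hx
    have hnr : List.replicate (n - r) b = List.replicate ((n - 1) - (r - 1)) b := by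
      rw [show (n - 1) - (r - 1) = n - r from by omega]
    rw [hysT, hnr] at hx
    exact mem_drop_ys (by omega) hx
  have hQ0 : ∀ q ∈ (l1 ++ smalls).zip ysT, u ≤ q.1 ∨ (q.2 = b ∧ q.1 ≤ z) := by
    have htl : l1.length = (ysT.take (bigs.length - 1)).length := by
      rw [List.length_take, hl1len, hysTlen]
      omega
    intro q hq
    rw [show ysT = ysT.take (bigs.length - 1) ++ ysT.drop (bigs.length - 1) from
        (List.take_append_drop _ _).symm, List.zip_append htl] at hq
    rcases List.mem_append.mp hq with hq | hq
    · exact Or.inl (hl1big _ (List.of_mem_zip hq).1)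
    · refine Or.inr ⟨hdropb bigs.length (by omega) _ (List.of_mem_zip hq).2, hsmallz _ (List.of_mem_zip hq).1⟩
  rw [hyscons] at hL0
  have hposT : ∀ c ∈ l1 ++ smalls, 1 ≤ c := fun c hc => hposA0 c (by simp [hc])
  obtain ⟨m0, hm0⟩ := runAnalysis (b := b) hz huz hL0 ha hQ0 hposT hlen01
    (by omega)
  have hm0pos : 1 ≤ m0 := by
    rcases Nat.eq_zero_or_pos m0 with h' | h'
    · rw [h'] at hm0; simp at hm0; omega
    · exact h'
  have hub : z + b ≤ u := by
    have : b ≤ m0 * b := Nat.le_mul_of_pos_left b hm0pos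
    omega
  have hra : 0 < r * a := Nat.mul_pos hr1 ha
  cases hsmcase : smalls with
  | nil =>
    -- no small preference at all: spot z can never be covered
    rw [hsmcase, List.append_nil] at hL0
    obtain ⟨occ', _, hcard', hsub'⟩ := parkRight (u := u) (z := z) (u :: l1) (a :: ysT)
      (Finset.Ico 1 z) L0 hL0
      (by
        intro c hc
        rcases List.mem_cons.mp hc with rfl | hc
        · exact le_refl _
        · exact hl1big c hc)
      Finset.subset_union_left
    have h1 : occ'.card ≤ (z - 1) + (M + 1 - u) := by
      calc occ'.card ≤ (Finset.Ico 1 z ∪ Finset.Ico u (M + 1)).card :=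
            Finset.card_le_card hsub'
      _ ≤ (Finset.Ico 1 z).card + (Finset.Ico u (M + 1)).card := Finset.card_union_le _ _
      _ = (z - 1) + (M + 1 - u) := by rw [Nat.card_Ico, Nat.card_Ico]
    rw [Nat.card_Ico] at hcard'
    have hsum' : (a :: ysT).sum = ys.sum := by rw [← hysTsum]; simp
    rw [hsum'] at hcard'
    omega
  | cons w smalls' =>
    have hwmem : w ∈ smalls := by rw [hsmcase]; simp
    have hwz : w ≤ z := hsmallz w hwmem
    have hsl : smalls.length = smalls'.length + 1 := by rw [hsmcase]; rfl
    -- the A1 arrangement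
    have hA1perm : (w :: u :: (l1 ++ smalls')).Perm cs := by
      have h1 : (u :: l1).Perm bigs := (List.perm_cons_erase humem).symm
      have h2 : ((u :: l1) ++ smalls).Perm (bigs ++ smalls) := h1.append_right smalls
      have h3 : ((u :: l1) ++ smalls) = u :: (l1 ++ (w :: smalls')) := by
        rw [hsmcase]; rfl
      have h4 : (l1 ++ (w :: smalls')).Perm (w :: (l1 ++ smalls')) := List.perm_middle
      have h5 : (w :: u :: (l1 ++ smalls')).Perm (u :: (l1 ++ (w :: smalls'))) := by
        refine List.Perm.trans (List.Perm.swap u w _) ?_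
        exact (List.Perm.cons u h4).symm
      exact h5.trans (h3 ▸ h2.trans hperm0)
    obtain ⟨hlenA1, hposA1, hsomeA1⟩ := hperm _ hA1perm
    obtain ⟨L1, hL1⟩ := Option.isSome_iff_exists.mp hsomeA1
    rw [parkResult, ← hM, hyscons] at hL1
    obtain ⟨j1, L1', hfe1, hfree1, hfit1, hrec1, rfl⟩ := parkAux_cons hL1
    obtain ⟨hj1not, hwj1, hj1M, hbefore1⟩ := firstEmpty_spec hfe1
    have hw1 : 1 ≤ w := hposA1 w (by simp)
    have hj1z : j1 = z := by
      rcases Nat.lt_trichotomy j1 z with h' | h' | h'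
      · exact absurd (Finset.mem_Ico.mpr ⟨by omega, h'⟩) hj1not
      · exact h'
      · have := hbefore1 z hwz h'
        rw [Finset.mem_Ico] at this; omega
    rw [hj1z] at hfree1 hfit1 hrec1
    have hocc1eq : Finset.Ico 1 z ∪ Finset.Ico z (z + a) = Finset.Ico 1 (z + a) :=
      Finset.Ico_union_Ico_eq_Ico (by omega) (by omega)
    rw [hocc1eq] at hrec1
    cases hysTcase : ysT with
    | nil => rw [hysTcase] at hysTlen; simp at hysTlen; omega
    | cons y2 ys2 =>
      rw [hysTcase] at hrec1
      have hy2 : 1 ≤ y2 := hysmem y2 (by rw [hyscons, hysTcase]; simp)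
      have hys2len : ys2.length = n - 2 := by
        rw [hysTcase] at hysTlen; simp at hysTlen; omega
      have hQ1 : ∀ q ∈ (l1 ++ smalls').zip ys2, u ≤ q.1 ∨ (q.2 = b ∧ q.1 ≤ z + a) := by
        have htl : l1.length = (ys2.take (bigs.length - 1)).length := by
          rw [List.length_take, hl1len, hys2len]
          omega
        intro q hq
        rw [show ys2 = ys2.take (bigs.length - 1) ++ ys2.drop (bigs.length - 1) from
            (List.take_append_drop _ _).symm, List.zip_append htl] at hq
        rcases List.mem_append.mp hq with hq | hq
        · exact Or.inl (hl1big _ (List.of_mem_zip hq).1)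
        · refine Or.inr ⟨?_, ?_⟩
          · have hdd : ys2.drop (bigs.length - 1) = ysT.drop ((bigs.length + 1) - 1) := by
              rw [hysTcase]
              rw [show (bigs.length + 1) - 1 = (bigs.length - 1) + 1 from by omega,
                List.drop_succ_cons]
            have hx2 := (List.of_mem_zip hq).2
            rw [hdd] at hx2
            exact hdropb (bigs.length + 1) (by omega) _ hx2
          · have hx1 := (List.of_mem_zip hq).1
            have : q.1 ∈ smalls := by rw [hsmcase]; simp [hx1]
            have := hsmallz _ this
            omega
      have hpos1 : ∀ c ∈ l1 ++ smalls', 1 ≤ c := by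
        intro c hc
        exact hposA1 c (by simp at hc ⊢; tauto)
      have hlen1 : (l1 ++ smalls').length = ys2.length := by
        simp [hys2len, hl1len]
        omega
      have hsum2 : ysT.sum = y2 + ys2.sum := by rw [hysTcase]; simp
      obtain ⟨m1, hm1⟩ := runAnalysis (b := b) (by omega : 1 ≤ z + a)
        (by omega : z + a < u) hrec1 hy2 hQ1 hpos1 hlen1 (by omega)
      -- final contradiction : b ∣ u - z and b ∣ u - z - a with 0 < a < b
      have heq : z + m0 * b = z + a + m1 * b := by omega
      have hlt : m1 * b < m0 * b := by omega
      have hm1m0 : m1 < m0 := lt_of_mul_lt_mul_right hlt (Nat.zero_le b)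
      have hmul : (m1 + 1) * b ≤ m0 * b := Nat.mul_le_mul_right b hm1m0
      rw [Nat.succ_mul] at hmul
      omega

/-- Peeling a small first car: it parks at `z` and extends the trailer. -/
theorem peel_small {M z a w : ℕ} (hz : 0 < z) (hw1 : 1 ≤ w) (hwz : w ≤ z)
    {σ ysT : List ℕ} {L : List ℕ}
    (h : parkAux M (Finset.Ico 1 z) (w :: σ) (a :: ysT) = some L) :
    ∃ L', parkAux M (Finset.Ico 1 (z + a)) σ ysT = some L' := by
  obtain ⟨j, L', hfe, hfree, hfit, hrec, rfl⟩ := parkAux_cons h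
  obtain ⟨hjnot, hwj, hjM, hbefore⟩ := firstEmpty_spec hfe
  have hjz : j = z := by
    rcases Nat.lt_trichotomy j z with h' | h' | h'
    · exact absurd (Finset.mem_Ico.mpr ⟨by omega, h'⟩) hjnot
    · exact h'
    · have := hbefore z hwz h'
      rw [Finset.mem_Ico] at this; omega
  rw [hjz] at hrec
  rw [Finset.Ico_union_Ico_eq_Ico (by omega) (by omega)] at hrec
  exact ⟨L', hrec⟩

/-- Full necessity: at most `r-1-k` preferences exceed `z + k·a`. -/
theorem necessity : ∀ (k n r a b z : ℕ), 1 ≤ r → r < n → 0 < a → a < b → 0 < z →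
    ∀ cs : List ℕ, cs.length = n → k ≤ r - 1 →
    PermInvariant (List.replicate r a ++ List.replicate (n - r) b) cs z →
    cs.countP (fun x => decide (z + k * a < x)) ≤ r - 1 - k := by
  intro k
  induction k with
  | zero =>
    intro n r a b z hr1 hrn ha hab hz cs hlen hk hperm
    have h0 := necessity0 hr1 hrn ha hab hz hlen hperm
    have hpe : (fun x => decide (z + 0 * a < x)) = (fun x => decide (z < x)) := by
      funext x; simp
    rw [hpe]
    simpa using h0
  | succ k ih =>
    intro n r a b z hr1 hrn ha hab hz cs hlen hk hperm
    have h0 := necessity0 hr1 hrn ha hab hz hlen hperm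
    obtain ⟨w, hwmem, hwz⟩ : ∃ w ∈ cs, w ≤ z := by
      by_contra hcon
      push_neg at hcon
      have : cs.countP (fun x => decide (z < x)) = cs.length := by
        apply List.countP_eq_length.mpr
        intro x hx; simpa using hcon x hx
      omega
    have hw1 : 1 ≤ w := by
      obtain ⟨_, hpos, _⟩ := hperm cs (List.Perm.refl cs)
      exact hpos w hwmem
    have hnr : (n - 1) - (r - 1) = n - r := by omega
    have hyscons : List.replicate r a ++ List.replicate (n - r) b
        = a :: (List.replicate (r - 1) a ++ List.replicate ((n - 1) - (r - 1)) b) := by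
      rw [hnr]
      cases r with
      | zero => omega
      | succ r' => simp [List.replicate_succ]
    have hsumT : a + (List.replicate (r - 1) a ++ List.replicate ((n - 1) - (r - 1)) b).sum
        = (List.replicate r a ++ List.replicate (n - r) b).sum := by
      rw [hyscons]; simp
    have hred : PermInvariant
        (List.replicate (r - 1) a ++ List.replicate ((n - 1) - (r - 1)) b)
        (cs.erase w) (z + a) := by
      intro σ hσ
      have hσ' : (w :: σ).Perm cs := ((hσ.cons w).trans (List.perm_cons_erase hwmem).symm)
      obtain ⟨hl, hpos, hsome⟩ := hperm _ hσ'
      have hσlen : σ.length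
          = (List.replicate (r - 1) a ++ List.replicate ((n - 1) - (r - 1)) b).length := by
        rw [hyscons] at hl
        simpa using hl
      refine ⟨hσlen, fun c hc => hpos c (by simp [hc]), ?_⟩
      obtain ⟨L, hL⟩ := Option.isSome_iff_exists.mp hsome
      rw [parkResult, hyscons] at hL
      obtain ⟨L', hL'⟩ := peel_small hz hw1 hwz hL
      rw [parkResult]
      have hMeq : z + a - 1
          + (List.replicate (r - 1) a ++ List.replicate ((n - 1) - (r - 1)) b).sum
          = z - 1 + (a :: (List.replicate (r - 1) a
              ++ List.replicate ((n - 1) - (r - 1)) b)).sum := by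
        rw [List.sum_cons]; omega
      rw [hMeq, hL']
      rfl
    have hred2 := ih (n - 1) (r - 1) a b (z + a) (by omega) (by omega) ha hab (by omega)
      (cs.erase w) (by rw [List.length_erase_of_mem hwmem, hlen]) (by omega) hred
    have hpe : (fun x => decide (z + a + k * a < x)) = (fun x => decide (z + (k+1) * a < x)) := by
      funext x
      have : z + a + k * a = z + (k + 1) * a := by ring
      rw [this]
    rw [hpe] at hred2
    have hcnt := (List.perm_cons_erase hwmem).countP_eq (p := fun x => decide (z + (k+1) * a < x))
    rw [hcnt, List.countP_cons]
    have hwp : (decide (z + (k+1) * a < w)) = false := by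
      simp; omega
    rw [hwp]
    simp
    omega

theorem cover_card {a : ℕ} : ∀ (l : List (ℕ × ℕ)) (s : Finset ℕ),
    (∀ x ∈ s, ∃ q ∈ l, x ∈ Finset.Ico q.2 (q.2 + a)) → s.card ≤ l.length * a := by
  intro l
  induction l with
  | nil =>
    intro s h
    have hs : s = ∅ := by
      apply Finset.eq_empty_of_forall_notMem
      intro x hx
      rcases h x hx with ⟨q, hq, _⟩
      simp at hq
    simp [hs]
  | cons q l ih =>
    intro s h
    have hsub : s ⊆ Finset.Ico q.2 (q.2 + a) ∪ (s \ Finset.Ico q.2 (q.2 + a)) := by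
      intro x hx
      rw [Finset.mem_union, Finset.mem_sdiff]
      by_cases h' : x ∈ Finset.Ico q.2 (q.2 + a)
      · exact Or.inl h'
      · exact Or.inr ⟨hx, h'⟩
    have h2 : (s \ Finset.Ico q.2 (q.2 + a)).card ≤ l.length * a := by
      apply ih
      intro x hx
      rw [Finset.mem_sdiff] at hx
      rcases h x hx.1 with ⟨q', hq', hxq⟩
      rcases List.mem_cons.mp hq' with rfl | hq'
      · exact absurd hxq hx.2
      · exact ⟨q', hq', hxq⟩
    have h3 : s.card ≤ a + l.length * a := by
      calc s.card ≤ (Finset.Ico q.2 (q.2 + a) ∪ (s \ Finset.Ico q.2 (q.2 + a))).card :=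
            Finset.card_le_card hsub
      _ ≤ (Finset.Ico q.2 (q.2 + a)).card + (s \ Finset.Ico q.2 (q.2 + a)).card :=
            Finset.card_union_le _ _
      _ ≤ a + l.length * a := by rw [Nat.card_Ico]; omega
    calc s.card ≤ a + l.length * a := h3
    _ = (q :: l).length * a := by simp [Nat.succ_mul]; ring

/-- The window lemma: under the count conditions, each of the remaining
`a`-cars parks with start in `[z, z+(r-1)a]`. -/
theorem window {M z r a : ℕ} {cs : List ℕ} (hz : 0 < z) (ha : 0 < a) (hr1 : 1 ≤ r)
    (HN : ∀ k, k ≤ r - 1 → cs.countP (fun x => decide (z + k * a < x)) ≤ r - 1 - k) :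
    ∀ (k : ℕ) (csR ysB : List ℕ) (pairs : List (ℕ × ℕ)) (occ : Finset ℕ) (L : List ℕ),
    parkAux M occ csR (List.replicate k a ++ ysB) = some L →
    (pairs.map Prod.fst ++ csR).Perm cs →
    (∀ c ∈ csR, 1 ≤ c) →
    pairs.length + k = r →
    Finset.Ico 1 z ⊆ occ →
    occ.card ≤ (z - 1) + pairs.length * a →
    (∀ x ∈ occ, x < z ∨ ∃ q ∈ pairs, x ∈ Finset.Ico q.2 (q.2 + a)) →
    (∀ q ∈ pairs, z ≤ q.2 ∧ Finset.Ico (max q.1 z) q.2 ⊆ occ ∧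
        Finset.Ico q.2 (q.2 + a) ⊆ occ) →
    ∀ i < k, z ≤ L.getD i 0 ∧ L.getD i 0 ≤ z + (r - 1) * a := by
  intro k
  induction k with
  | zero => intro csR ysB pairs occ L _ _ _ _ _ _ _ _ i hi; omega
  | succ k ih =>
    intro csR ysB pairs occ L hrun hperm hpos hlenp hlow hcard hdec hpairs
    cases csR with
    | nil =>
      rw [List.replicate_succ] at hrun
      exact (by have h' : (none : Option (List ℕ)) = some L :=
        ((show parkAux M occ [] (a :: (List.replicate k a ++ ysB)) = none from rfl) ▸ hrun); cases h')
    | cons c csR' =>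
      rw [List.replicate_succ, List.cons_append] at hrun
      obtain ⟨j, L', hfe, hfree, hfit, hrec, rfl⟩ := parkAux_cons hrun
      obtain ⟨hjnot, hcj, hjM, hbefore⟩ := firstEmpty_spec hfe
      have hc1 : 1 ≤ c := hpos c (by simp)
      have hcmem : c ∈ cs := hperm.mem_iff.mp (by simp)
      have hzj : z ≤ j := by
        by_contra h'
        exact hjnot (hlow (Finset.mem_Ico.mpr ⟨by omega, by omega⟩))
      -- c is at most z + (r-1)a
      have hcLb : c ≤ z + (r - 1) * a := by
        by_contra h'
        push_neg at h'
        have h1 : 0 < cs.countP (fun x => decide (z + (r - 1) * a < x)) := by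
          rw [List.countP_pos_iff]
          exact ⟨c, hcmem, by simpa using h'⟩
        have h2 := HN (r - 1) (le_refl _)
        omega
      -- the start j is at most z + (r-1)a
      have hjLb : j ≤ z + (r - 1) * a := by
        by_contra hbig
        push_neg at hbig
        -- minimal u ≥ z with [u, j) occupied
        set S := (Finset.Icc z j).filter (fun x => Finset.Ico x j ⊆ occ) with hS
        have hjS : j ∈ S := by
          rw [hS, Finset.mem_filter, Finset.mem_Icc]
          exact ⟨⟨hzj, le_refl j⟩, by simp⟩
        have hne : S.Nonempty := ⟨j, hjS⟩
        set u := S.min' hne with hu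
        have humem : u ∈ S := S.min'_mem hne
        rw [hS, Finset.mem_filter, Finset.mem_Icc] at humem
        obtain ⟨⟨hzu, huj⟩, hUsub⟩ := humem
        have humin : ∀ x ∈ S, u ≤ x := fun x hx => S.min'_le x hx
        have hcu : u ≤ max c z := by
          apply humin
          rw [hS, Finset.mem_filter, Finset.mem_Icc]
          refine ⟨⟨le_max_right c z, by omega⟩, ?_⟩
          intro x hx
          rw [Finset.mem_Ico] at hx
          exact hbefore x (le_trans (le_max_left c z) hx.1) hx.2
        have hmaxcz : max c z ≤ z + (r - 1) * a := by
          rcases max_cases c z with ⟨h1, _⟩ | ⟨h1, _⟩ <;> omega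
        rcases Nat.eq_or_lt_of_le hzu with hzeq | hzlt
        · -- u = z : the whole street [1, j) is occupied, card too small
          have hIj : Finset.Ico 1 j ⊆ occ := by
            intro x hx
            rw [Finset.mem_Ico] at hx
            rcases Nat.lt_or_ge x z with h' | h'
            · exact hlow (Finset.mem_Ico.mpr ⟨hx.1, h'⟩)
            · exact hUsub (Finset.mem_Ico.mpr ⟨by omega, hx.2⟩)
          have h1 : j - 1 ≤ occ.card := by
            have := Finset.card_le_card hIj
            rw [Nat.card_Ico] at this
            omega
          have h2 : pairs.length * a ≤ (r - 1) * a :=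
            Nat.mul_le_mul_right a (by omega)
          omega
        · -- z < u : count the block of cars covering [u, j)
          have hu1not : u - 1 ∉ occ := by
            intro hmem
            have : u - 1 ∈ S := by
              rw [hS, Finset.mem_filter, Finset.mem_Icc]
              refine ⟨⟨by omega, by omega⟩, ?_⟩
              intro x hx
              rw [Finset.mem_Ico] at hx
              rcases Nat.eq_or_lt_of_le hx.1 with h' | h'
              · rw [← h']; exact hmem
              · exact hUsub (Finset.mem_Ico.mpr ⟨by omega, hx.2⟩)
            have := humin _ this
            omega
          set T := pairs.filter (fun q => decide (u ≤ q.2 ∧ q.2 < j)) with hT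
          have hTcov : ∀ x ∈ Finset.Ico u j, ∃ q ∈ T, x ∈ Finset.Ico q.2 (q.2 + a) := by
            intro x hx
            have hxocc := hUsub hx
            rw [Finset.mem_Ico] at hx
            rcases hdec x hxocc with h' | ⟨q, hq, hxq⟩
            · omega
            · rw [Finset.mem_Ico] at hxq
              have hq2u : u ≤ q.2 := by
                by_contra h''
                push_neg at h''
                apply hu1not
                apply (hpairs q hq).2.2
                rw [Finset.mem_Ico]
                omega
              refine ⟨q, ?_, Finset.mem_Ico.mpr hxq⟩
              rw [hT, List.mem_filter]
              exact ⟨hq, by simp; omega⟩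
          have hcov := cover_card T (Finset.Ico u j) hTcov
          rw [Nat.card_Ico] at hcov
          set m := T.length with hm
          have hmle : m ≤ pairs.length := by
            rw [hm, hT]; exact List.length_filter_le _ _
          have hmr : m ≤ r - 1 := by omega
          have hsplit : (r - 1 - m) + m = r - 1 := by omega
          have hmula : (r - 1 - m) * a + m * a = (r - 1) * a := by
            rw [← Nat.add_mul, hsplit]
          have huv : z + (r - 1 - m) * a < u := by omega
          -- every preference in T exceeds v, and so does c
          have hTpref : ∀ q ∈ T, z + (r - 1 - m) * a < q.1 := by
            intro q hq
            rw [hT, List.mem_filter] at hq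
            have hq2 := hq.2
            simp at hq2
            have hqu : u ≤ q.1 := by
              by_contra h''
              push_neg at h''
              apply hu1not
              apply (hpairs q hq.1).2.1
              rw [Finset.mem_Ico]
              constructor
              · rcases max_cases q.1 z with ⟨h1, _⟩ | ⟨h1, _⟩ <;> omega
              · omega
            omega
          have hcv : z + (r - 1 - m) * a < c := by
            rcases max_cases c z with ⟨h1, _⟩ | ⟨h1, _⟩ <;> omega
          -- count them in cs
          have hcount : m + 1 ≤ cs.countP (fun x => decide (z + (r - 1 - m) * a < x)) := by
            rw [← hperm.countP_eq, List.countP_append]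
            have hA : m ≤ (pairs.map Prod.fst).countP
                (fun x => decide (z + (r - 1 - m) * a < x)) := by
              have hsub : (T.map Prod.fst).Sublist (pairs.map Prod.fst) :=
                (List.filter_sublist (l := pairs)).map Prod.fst
              have h1 : (T.map Prod.fst).countP (fun x => decide (z + (r - 1 - m) * a < x))
                  = (T.map Prod.fst).length := by
                rw [List.countP_eq_length]
                intro x hx
                rcases List.mem_map.mp hx with ⟨q, hq, rfl⟩
                simpa using hTpref q hq
              have h2 := hsub.countP_le (p := fun x => decide (z + (r - 1 - m) * a < x))
              rw [h1] at h2
              simpa using h2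
            have hB : 1 ≤ (c :: csR').countP (fun x => decide (z + (r - 1 - m) * a < x)) := by
              rw [List.countP_cons]
              simp [hcv]
            omega
          have := HN (r - 1 - m) (by omega)
          omega
      -- establish the invariants for the recursive call
      have hppm : ((((c, j) :: pairs).map Prod.fst) ++ csR').Perm cs := by
        refine List.Perm.trans ?_ hperm
        simp only [List.map_cons, List.cons_append]
        exact (List.perm_middle).symm
      have hlow2 : Finset.Ico 1 z ⊆ occ ∪ Finset.Ico j (j + a) :=
        le_trans hlow Finset.subset_union_left
      have hcard2 : (occ ∪ Finset.Ico j (j + a)).card ≤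
          (z - 1) + ((c, j) :: pairs).length * a := by
        have h1 := Finset.card_union_le occ (Finset.Ico j (j + a))
        rw [Nat.card_Ico] at h1
        have h2 : ((c, j) :: pairs).length * a = pairs.length * a + a := by
          simp [Nat.succ_mul]
        omega
      have hdec2 : ∀ x ∈ occ ∪ Finset.Ico j (j + a),
          x < z ∨ ∃ q ∈ (c, j) :: pairs, x ∈ Finset.Ico q.2 (q.2 + a) := by
        intro x hx
        rcases Finset.mem_union.mp hx with hx | hx
        · rcases hdec x hx with h' | ⟨q, hq, hxq⟩
          · exact Or.inl h'
          · exact Or.inr ⟨q, by simp [hq], hxq⟩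
        · exact Or.inr ⟨(c, j), by simp, hx⟩
      have hpairs2 : ∀ q ∈ (c, j) :: pairs, z ≤ q.2 ∧
          Finset.Ico (max q.1 z) q.2 ⊆ occ ∪ Finset.Ico j (j + a) ∧
          Finset.Ico q.2 (q.2 + a) ⊆ occ ∪ Finset.Ico j (j + a) := by
        intro q hq
        rcases List.mem_cons.mp hq with rfl | hq
        · refine ⟨hzj, ?_, Finset.subset_union_right⟩
          intro x hx
          rw [Finset.mem_Ico] at hx
          exact Finset.mem_union_left _
            (hbefore x (le_trans (le_max_left c z) hx.1) hx.2)
        · obtain ⟨h1, h2, h3⟩ := hpairs q hq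
          exact ⟨h1, le_trans h2 Finset.subset_union_left,
            le_trans h3 Finset.subset_union_left⟩
      have hih := ih csR' ysB ((c, j) :: pairs) (occ ∪ Finset.Ico j (j + a)) L' hrec hppm
        (fun x hx => hpos x (by simp [hx])) (by simp at hlenp ⊢; omega)
        hlow2 hcard2 hdec2 hpairs2
      intro i hi
      cases i with
      | zero => exact ⟨hzj, hjLb⟩
      | succ i => simpa using hih i (by omega)

theorem stmt11 (n r a b z : ℕ) (hn : 2 ≤ n) (hr1 : 1 ≤ r) (hrn : r < n)
    (ha : 0 < a) (hab : a < b) (hz : 0 < z) (cs : List ℕ)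
    (hperm : PermInvariant (List.replicate r a ++ List.replicate (n - r) b) cs z) :
    ∃ starts : List ℕ,
      parkResult (List.replicate r a ++ List.replicate (n - r) b) cs z = some starts ∧
      ∀ i < r, z ≤ starts.getD i 0 ∧ starts.getD i 0 + a ≤ z + r * a := by
  obtain ⟨hlenid, hposid, hsomeid⟩ := hperm cs (List.Perm.refl cs)
  obtain ⟨starts, hstarts⟩ := Option.isSome_iff_exists.mp hsomeid
  refine ⟨starts, hstarts, ?_⟩
  have hlen : cs.length = n := by
    rw [hlenid]; simp; omega
  have HN : ∀ k, k ≤ r - 1 →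
      cs.countP (fun x => decide (z + k * a < x)) ≤ r - 1 - k := by
    intro k hk
    exact necessity k n r a b z hr1 hrn ha hab hz cs hlen hk hperm
  rw [parkResult] at hstarts
  have hwin := window (M := z - 1 + (List.replicate r a ++ List.replicate (n - r) b).sum)
    hz ha hr1 HN r cs (List.replicate (n - r) b) [] (Finset.Ico 1 z) starts
    hstarts (by simp) hposid (by simp)
    (le_refl _) (by rw [Nat.card_Ico]; simp)
    (fun x hx => Or.inl (Finset.mem_Ico.mp hx).2)
    (by simp)
  intro i hi
  obtain ⟨h1, h2⟩ := hwin i hi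
  have h3 : (r - 1) * a = r * a - a := Nat.sub_one_mul r a
  have h4 : a ≤ r * a := Nat.le_mul_of_pos_left a hr1
  exact ⟨h1, by omega⟩
end
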